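/- arXiv:2304.04324 — 6 statements merged into one kernel-verified Lean document; each statement's English description precedes it below -/
import Mathlib

section
/- For all positive integers n and k, the multiplicity of k in S(n) is given by #_k S(n) = Σ_ℓ (2^ℓ − |n + 1 − (k+1)·2^ℓ|), where the sum ranges over all integers ℓ ≥ 0 satisfying (n+2)/(k+2) ≤ 2^ℓ ≤ n/k (equivalently, ⌈log₂((n+2)/(k+2))⌉ ≤ ℓ ≤ ⌊log₂(n/k)⌋), with an empty sum equal to 0. -/
open Nat

/-- The multiset `S n` of interval lengths: `S 0 = ∅` and
`S n = {n} ∪ S ⌊(n-1)/2⌋ ∪ S ⌈(n-1)/2⌉` (union adding multiplicities). -/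
def S : ℕ → Multiset ℕ
  | 0 => 0
  | n + 1 => (n + 1) ::ₘ (S (n / 2) + S ((n + 1) / 2))
decreasing_by all_goals omega

def g (n k ℓ : ℕ) : ℕ :=
  (if (n+1)/2^ℓ = k then (n+1) % 2^ℓ else 0) +
  (if (n+1)/2^ℓ = k+1 then 2^ℓ - (n+1) % 2^ℓ else 0)

lemma key (p k D1 M1 D2 M2 : ℕ) (hp : 0 < p) (hM1 : M1 < 2*p)
    (hrel : (M1 + 1 < 2*p ∧ D2 = D1 ∧ M2 = M1 + 1) ∨ (M1 = 2*p - 1 ∧ D2 = D1 + 1 ∧ M2 = 0)) :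
    ((if D1 = k then M1 else 0) + (if D1 = k+1 then 2*p - M1 else 0)) =
    (((if D1 = k then M1/2 else 0) + (if D1 = k+1 then p - M1/2 else 0)) +
    ((if D2 = k then M2/2 else 0) + (if D2 = k+1 then p - M2/2 else 0))) := by
  split_ifs <;> omega

lemma g_succ (n k ℓ : ℕ) (hn : 1 ≤ n) :
    g n k (ℓ+1) = g ((n-1)/2) k ℓ + g (n/2) k ℓ := by
  have hp : 0 < 2^ℓ := Nat.two_pow_pos ℓ
  have h1 : (n-1)/2 + 1 = (n+1)/2 := by omega
  have h2 : n/2 + 1 = (n+2)/2 := by omega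
  have hP : 2^(ℓ+1) = 2 * 2^ℓ := by rw [pow_succ]; ring
  have hd1 : (n+1)/2/2^ℓ = (n+1)/(2*2^ℓ) := Nat.div_div_eq_div_mul _ _ _
  have hm1 : (n+1)/2 % 2^ℓ = (n+1)%(2*2^ℓ)/2 := (Nat.mod_mul_right_div_self (n+1) 2 (2^ℓ)).symm
  have hd2 : (n+2)/2/2^ℓ = (n+2)/(2*2^ℓ) := Nat.div_div_eq_div_mul _ _ _
  have hm2 : (n+2)/2 % 2^ℓ = (n+2)%(2*2^ℓ)/2 := (Nat.mod_mul_right_div_self (n+2) 2 (2^ℓ)).symm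
  have hM1 : (n+1)%(2*2^ℓ) < 2*2^ℓ := Nat.mod_lt _ (by omega)
  have hmod : (n+2)%(2*2^ℓ) = ((n+1)%(2*2^ℓ) + 1) % (2*2^ℓ) := by
    conv_lhs => rw [show n + 2 = (n+1) + 1 by ring, Nat.add_mod]
    rw [Nat.mod_eq_of_lt (show 1 < 2*2^ℓ by omega)]
  have hdiv : (n+2)/(2*2^ℓ) = (n+1)/(2*2^ℓ) + if 2*2^ℓ ∣ (n+1)+1 then 1 else 0 :=
    Nat.succ_div (a := n+1) (b := 2*2^ℓ)
  have hrel : ((n+1)%(2*2^ℓ) + 1 < 2*2^ℓ ∧ (n+2)/(2*2^ℓ) = (n+1)/(2*2^ℓ) ∧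
        (n+2)%(2*2^ℓ) = (n+1)%(2*2^ℓ) + 1) ∨
      ((n+1)%(2*2^ℓ) = 2*2^ℓ - 1 ∧ (n+2)/(2*2^ℓ) = (n+1)/(2*2^ℓ) + 1 ∧
        (n+2)%(2*2^ℓ) = 0) := by
    by_cases hd : 2*2^ℓ ∣ (n+1)+1
    · right
      have h0 : (n+2)%(2*2^ℓ) = 0 := Nat.dvd_iff_mod_eq_zero.mp hd
      rw [if_pos hd] at hdiv
      have hM : (n+1)%(2*2^ℓ) = 2*2^ℓ - 1 := by
        rcases Nat.lt_or_ge ((n+1)%(2*2^ℓ) + 1) (2*2^ℓ) with h|h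
        · rw [Nat.mod_eq_of_lt h] at hmod; omega
        · omega
      exact ⟨hM, hdiv, h0⟩
    · left
      rw [if_neg hd] at hdiv
      have h0 : (n+2)%(2*2^ℓ) ≠ 0 := fun h => hd (Nat.dvd_iff_mod_eq_zero.mpr h)
      have hlt : (n+1)%(2*2^ℓ) + 1 < 2*2^ℓ := by
        rcases Nat.lt_or_ge ((n+1)%(2*2^ℓ) + 1) (2*2^ℓ) with h|h
        · exact h
        · have : (n+1)%(2*2^ℓ) + 1 = 2*2^ℓ := by omega
          rw [this, Nat.mod_self] at hmod; omega
      rw [Nat.mod_eq_of_lt hlt] at hmod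
      exact ⟨hlt, by omega, hmod⟩
  unfold g
  rw [h1, h2, hP, hd1, hm1, hd2, hm2]
  exact key (2^ℓ) k _ _ _ _ hp hM1 hrel

lemma g_tail {n k ℓ : ℕ} (h : n + 1 < 2^ℓ) (hk : 0 < k) : g n k ℓ = 0 := by
  have h0 : (n+1)/2^ℓ = 0 := Nat.div_eq_of_lt h
  unfold g
  rw [h0, if_neg (by omega), if_neg (by omega)]

lemma sum_g_ext (a k N : ℕ) (hk : 0 < k) (h : a + 1 ≤ N) :
    ∑ ℓ ∈ Finset.range N, g a k ℓ = ∑ ℓ ∈ Finset.range (a+1), g a k ℓ := by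
  refine (Finset.sum_subset (Finset.range_subset_range.mpr h) ?_).symm
  intro ℓ _ hℓ
  rw [Finset.mem_range, not_lt] at hℓ
  exact g_tail (lt_of_lt_of_le Nat.lt_two_pow_self (Nat.pow_le_pow_right (by norm_num) hℓ)) hk

lemma lemA (k : ℕ) (hk : 0 < k) :
    ∀ n, Multiset.count k (S n) = ∑ ℓ ∈ Finset.range (n+1), g n k ℓ := by
  intro n
  induction n using Nat.strong_induction_on with
  | _ n ih =>
    match n with
    | 0 =>
      rw [show S 0 = (0 : Multiset ℕ) by rw [S]]
      have hg : g 0 k 0 = 0 := by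
        unfold g
        have h1 : (0+1)/2^0 = 1 := by norm_num
        have h2 : (0+1) % 2^0 = 0 := by norm_num
        rw [h1, h2, if_neg (show ¬(1 = k+1) by omega)]
        simp
      rw [Multiset.count_zero, show (0:ℕ)+1 = 1 from rfl, Finset.sum_range_one, hg]
    | (m+1) =>
      rw [show S (m+1) = (m+1) ::ₘ (S (m/2) + S ((m+1)/2)) by rw [S]]
      rw [Multiset.count_cons, Multiset.count_add]
      rw [ih (m/2) (by omega), ih ((m+1)/2) (by omega)]
      have hR : ∑ ℓ ∈ Finset.range (m+1+1), g (m+1) k ℓ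
          = ((∑ ℓ ∈ Finset.range (m+1), g (m/2) k ℓ)
            + ∑ ℓ ∈ Finset.range (m+1), g ((m+1)/2) k ℓ) + g (m+1) k 0 := by
        rw [Finset.sum_range_succ']
        congr 1
        rw [← Finset.sum_add_distrib]
        refine Finset.sum_congr rfl (fun ℓ _ => ?_)
        have := g_succ (m+1) k ℓ (by omega)
        simpa using this
      rw [hR, sum_g_ext (m/2) k (m+1) hk (by omega),
        sum_g_ext ((m+1)/2) k (m+1) hk (by omega)]
      have hg0 : g (m+1) k 0 = if k = m+1 then 1 else 0 := by
        unfold g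
        simp only [pow_zero, Nat.div_one, Nat.mod_one]
        split_ifs <;> omega
      rw [hg0]
      all_goals (split_ifs <;> omega)

lemma term_eq (n k ℓ : ℕ) (hk : 0 < k) :
    (g n k ℓ : ℤ) =
      if ((n : ℚ) + 2) / ((k : ℚ) + 2) ≤ 2 ^ ℓ ∧ (2 : ℚ) ^ ℓ ≤ (n : ℚ) / (k : ℚ) then
        ((2 : ℤ) ^ ℓ - |(n : ℤ) + 1 - ((k : ℤ) + 1) * 2 ^ ℓ|) else 0 := by
  have hp : 0 < 2^ℓ := Nat.two_pow_pos ℓ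
  have hcond : (((n : ℚ) + 2) / ((k : ℚ) + 2) ≤ 2 ^ ℓ ∧ (2 : ℚ) ^ ℓ ≤ (n : ℚ) / (k : ℚ)) ↔
      (n + 2 ≤ (k+2) * 2^ℓ ∧ k * 2^ℓ ≤ n) := by
    rw [div_le_iff₀ (by positivity), le_div_iff₀ (by exact_mod_cast hk)]
    constructor
    · rintro ⟨h1, h2⟩
      constructor
      · have : ((n:ℚ) + 2) ≤ ((k:ℚ)+2) * 2^ℓ := by linarith [h1]
        exact_mod_cast this
      · have : ((k:ℚ)) * 2^ℓ ≤ n := by linarith [h2]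
        exact_mod_cast this
    · rintro ⟨h1, h2⟩
      constructor
      · have : ((n:ℚ) + 2) ≤ ((k:ℚ)+2) * 2^ℓ := by exact_mod_cast h1
        linarith
      · have : ((k:ℚ)) * 2^ℓ ≤ n := by exact_mod_cast h2
        linarith
  rw [if_congr hcond rfl rfl]
  have hdm := Nat.div_add_mod (n+1) (2^ℓ)
  have hmlt : (n+1) % 2^ℓ < 2^ℓ := Nat.mod_lt _ hp
  have hge : k ≤ (n+1)/2^ℓ ↔ k * 2^ℓ ≤ n+1 := Nat.le_div_iff_mul_le hp
  have hlt2 : (n+1)/2^ℓ < k+2 ↔ n+1 < (k+2) * 2^ℓ := Nat.div_lt_iff_lt_mul hp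
  have hx : (k+2)*2^ℓ = 2^ℓ*k + 2*2^ℓ := by ring
  have hy : k*2^ℓ = 2^ℓ*k := Nat.mul_comm _ _
  by_cases hq : (n+1)/2^ℓ = k
  · rw [hq] at hdm
    have hgv : g n k ℓ = (n+1) % 2^ℓ := by
      unfold g; rw [if_pos hq, if_neg (by omega)]; omega
    rw [hgv]
    by_cases hc : n + 2 ≤ (k+2) * 2^ℓ ∧ k * 2^ℓ ≤ n
    · rw [if_pos hc]
      have e1 : ((2:ℤ)^ℓ) * k + ((n+1) % 2^ℓ : ℕ) = (n:ℤ) + 1 := by exact_mod_cast hdm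
      have e2 : ((n : ℤ) + 1 - ((k : ℤ) + 1) * 2 ^ ℓ) = ((n+1) % 2^ℓ : ℕ) - (2:ℤ)^ℓ := by
        linarith [e1]
      have e3 : (((n+1) % 2^ℓ : ℕ) : ℤ) - (2:ℤ)^ℓ ≤ 0 := by
        have : (((n+1) % 2^ℓ : ℕ) : ℤ) < (2:ℤ)^ℓ := by exact_mod_cast hmlt
        linarith
      rw [e2, abs_of_nonpos e3]
      push_cast
      ring
    · rw [if_neg hc]
      have h1 : n + 2 ≤ (k+2) * 2^ℓ := by omega
      have h2 : ¬ (k * 2^ℓ ≤ n) := fun h => hc ⟨h1, h⟩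
      have hm0 : (n+1) % 2^ℓ = 0 := by omega
      rw [hm0]; norm_num
  · by_cases hq' : (n+1)/2^ℓ = k+1
    · rw [hq', Nat.mul_succ] at hdm
      have hgv : g n k ℓ = 2^ℓ - (n+1) % 2^ℓ := by
        unfold g; rw [if_neg hq, if_pos hq']; omega
      have hc : n + 2 ≤ (k+2) * 2^ℓ ∧ k * 2^ℓ ≤ n := by
        constructor <;> omega
      rw [hgv, if_pos hc]
      have e1 : ((2:ℤ)^ℓ) * k + (2:ℤ)^ℓ + ((n+1) % 2^ℓ : ℕ) = (n:ℤ) + 1 := by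
        exact_mod_cast hdm
      have e2 : ((n : ℤ) + 1 - ((k : ℤ) + 1) * 2 ^ ℓ) = ((n+1) % 2^ℓ : ℕ) := by linarith
      rw [e2, abs_of_nonneg (by positivity)]
      have e3 : ((2^ℓ - (n+1) % 2^ℓ : ℕ) : ℤ) = (2:ℤ)^ℓ - ((n+1) % 2^ℓ : ℕ) := by
        push_cast [Nat.cast_sub hmlt.le]
        ring
      rw [e3]
    · have hgv : g n k ℓ = 0 := by unfold g; rw [if_neg hq, if_neg hq']
      have hc : ¬ (n + 2 ≤ (k+2) * 2^ℓ ∧ k * 2^ℓ ≤ n) := by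
        rintro ⟨h1, h2⟩
        have hk1 : k ≤ (n+1)/2^ℓ := hge.mpr (by omega)
        have hk2 : (n+1)/2^ℓ < k+2 := hlt2.mpr (by omega)
        omega
      rw [hgv, if_neg hc]
      norm_num

/-- Lemma 1: for positive integers `n, k`,
`#ₖ S(n) = Σ_ℓ (2^ℓ − |n+1−(k+1)·2^ℓ|)` where the sum is over all `ℓ ≥ 0`
with `(n+2)/(k+2) ≤ 2^ℓ ≤ n/k` (such `ℓ` necessarily satisfy `ℓ ≤ n`). -/
theorem stmt0 (n k : ℕ) (hn : 0 < n) (hk : 0 < k) :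
    (Multiset.count k (S n) : ℤ) =
      ∑ ℓ ∈ (Finset.range (n + 1)).filter
          (fun ℓ => ((n : ℚ) + 2) / ((k : ℚ) + 2) ≤ 2 ^ ℓ ∧ (2 : ℚ) ^ ℓ ≤ (n : ℚ) / (k : ℚ)),
        ((2 : ℤ) ^ ℓ - |(n : ℤ) + 1 - ((k : ℤ) + 1) * 2 ^ ℓ|) := by
  rw [lemA k hk n, Finset.sum_filter, Nat.cast_sum]
  exact Finset.sum_congr rfl (fun ℓ _ => term_eq n k ℓ hk)
end

section
/- For every integer n ≥ 1, setting ℓ = ⌊log₂ n⌋, the multiplicity of 1 in S(n) satisfies: #_1 S(n) = 1 + (n mod 2^ℓ) if n ≥ 3·2^{ℓ−1} − 1, and #_1 S(n) = 2^{ℓ−1} if n < 3·2^{ℓ−1} − 1. -/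
open Nat

lemma S_succ (n : ℕ) : S (n + 1) = (n + 1) ::ₘ (S (n / 2) + S ((n + 1) / 2)) := by
  rw [S]

lemma count_one : ∀ n, ∀ ℓ, 2 ^ ℓ ≤ n → n < 2 ^ (ℓ + 1) →
    Multiset.count 1 (S n) = max (n + 1 - 2 ^ ℓ) (2 ^ ℓ / 2) := by
  intro n
  induction n using Nat.strong_induction_on with
  | _ n ih =>
    intro ℓ h1 h2
    have hp : 1 ≤ 2 ^ ℓ := Nat.one_le_two_pow
    have hn1 : 1 ≤ n := le_trans hp h1
    rcases Nat.lt_or_ge n 3 with h3 | h3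
    · interval_cases n
      · have hl : 2 ^ ℓ = 1 := le_antisymm h1 hp
        simp [S_succ, S, hl]
      · have hl : ℓ = 1 := by
          rcases ℓ with _ | _ | k
          · simp at h2
          · rfl
          · exfalso
            have : (4:ℕ) ≤ 2 ^ (k + 2) := by
              calc (4:ℕ) = 2 ^ 2 := rfl
              _ ≤ 2 ^ (k + 2) := Nat.pow_le_pow_right (by norm_num) (by omega)
            omega
        subst hl
        norm_num [S_succ, S]
    · have hSn : S n = n ::ₘ (S ((n - 1) / 2) + S (n / 2)) := by
        obtain ⟨m, rfl⟩ : ∃ m, n = m + 1 := ⟨n - 1, by omega⟩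
        simpa using S_succ m
      rw [hSn, Multiset.count_cons, Multiset.count_add, if_neg (by omega)]
      by_cases hsp : n = 2 ^ ℓ
      · have hl2 : 2 ≤ ℓ := by
          by_contra hc
          interval_cases ℓ <;> simp_all <;> omega
        obtain ⟨m, rfl⟩ : ∃ m, ℓ = m + 2 := ⟨ℓ - 2, by omega⟩
        have e1 : 2 ^ (m + 1) = 2 * 2 ^ m := by ring
        have e2 : 2 ^ (m + 2) = 4 * 2 ^ m := by ring
        have e3 : 2 ^ (m + 3) = 8 * 2 ^ m := by ring
        have hp1 : 1 ≤ 2 ^ m := Nat.one_le_two_pow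
        rw [e2] at hsp
        have hA : (n - 1) / 2 = 2 * 2 ^ m - 1 := by omega
        have hB : n / 2 = 2 * 2 ^ m := by omega
        rw [hA, hB,
          ih (2 * 2 ^ m - 1) (by omega) m (by omega) (by rw [e1]; omega),
          ih (2 * 2 ^ m) (by omega) (m + 1) (by rw [e1]) (by rw [e2]; omega),
          e1, e2]
        omega
      · have hl1 : 1 ≤ ℓ := by
          by_contra hc
          have : ℓ = 0 := by omega
          subst this
          simp at h2
          omega
        obtain ⟨m, rfl⟩ : ∃ m, ℓ = m + 1 := ⟨ℓ - 1, by omega⟩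
        have e1 : 2 ^ (m + 1) = 2 * 2 ^ m := by ring
        have e2 : 2 ^ (m + 2) = 4 * 2 ^ m := by ring
        have hp1 : 1 ≤ 2 ^ m := Nat.one_le_two_pow
        rw [e1] at h1 hsp
        rw [e2] at h2
        have hq : 2 ^ m = 1 ∨ 2 ^ m % 2 = 0 := by
          rcases m with _ | k
          · left; rfl
          · right
            have : 2 ^ (k + 1) = 2 * 2 ^ k := by ring
            omega
        rw [ih ((n - 1) / 2) (by omega) m (by omega) (by rw [e1]; omega),
          ih (n / 2) (by omega) m (by omega) (by rw [e1]; omega),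
          e1]
        omega

/-- The multiplicity of `1` in `S n`, with `ℓ = ⌊log₂ n⌋`:
it is `1 + (n mod 2^ℓ)` if `n ≥ 3·2^(ℓ-1) − 1` and `2^(ℓ-1)` otherwise. -/
theorem stmt2 (n : ℕ) (hn : 1 ≤ n) :
    ((3 : ℚ) * 2 ^ Nat.log 2 n / 2 - 1 ≤ (n : ℚ) →
      Multiset.count 1 (S n) = 1 + n % 2 ^ Nat.log 2 n) ∧
    ((n : ℚ) < (3 : ℚ) * 2 ^ Nat.log 2 n / 2 - 1 →
      Multiset.count 1 (S n) = 2 ^ (Nat.log 2 n - 1)) := by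
  set L := Nat.log 2 n with hL
  have h1 : 2 ^ L ≤ n := Nat.pow_log_le_self 2 (by omega)
  have h2 : n < 2 ^ (L + 1) := Nat.lt_pow_succ_log_self (by norm_num) n
  have key := count_one n L h1 h2
  have e : 2 ^ (L + 1) = 2 * 2 ^ L := by ring
  rw [e] at h2
  have hp : 1 ≤ 2 ^ L := Nat.one_le_two_pow
  constructor
  · intro h
    have h' : 3 * 2 ^ L ≤ 2 * n + 2 := by
      have hq : (3 : ℚ) * 2 ^ L ≤ 2 * n + 2 := by linarith
      exact_mod_cast hq
    have hmod : n % 2 ^ L = n - 2 ^ L := by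
      rw [Nat.mod_eq_sub_mod h1, Nat.mod_eq_of_lt (by omega)]
    rw [key, hmod]
    omega
  · intro h
    have h' : 2 * n + 2 < 3 * 2 ^ L := by
      have hq : (2 : ℚ) * n + 2 < 3 * 2 ^ L := by linarith
      exact_mod_cast hq
    obtain ⟨m, hm⟩ : ∃ m, L = m + 1 := by
      refine ⟨L - 1, ?_⟩
      rcases Nat.eq_zero_or_pos L with h0 | h0
      · rw [h0] at h'; simp at h'; omega
      · omega
    rw [key, hm]
    have e1 : 2 ^ (m + 1) = 2 * 2 ^ m := by ring
    rw [hm, e1] at h' h1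
    have : m + 1 - 1 = m := by omega
    rw [this, e1]
    omega
end

section
/- For all positive integers n and k, #_k S(n) = Σ_{ℓ≥0} Σ_{q ∈ Q^ℓ : k·2^ℓ + v(q) = n} 2^{u(q)}, where Q = {0,1,2}, and for q = (q_1,…,q_ℓ) ∈ Q^ℓ one defines v(q) = Σ_{i=1}^ℓ q_i·2^{ℓ−i} and u(q) = the number of indices i with q_i = 1 (the inner sum over the empty set is 0, and for ℓ = 0 the only tuple q has v(q) = 0 and u(q) = 0). -/
open Nat

/-- auxiliary summand -/
def gaux (k n ℓ : ℕ) : ℕ :=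
  ∑ q : Fin ℓ → Fin 3,
    if k * 2 ^ ℓ + ∑ i : Fin ℓ, (q i : ℕ) * 2 ^ (ℓ - 1 - (i : ℕ)) = n then
      ∏ i : Fin ℓ, (if q i = 1 then 2 else 1) else 0

lemma gaux_eq (k n ℓ : ℕ) :
    (∑ q ∈ Finset.univ.filter
        (fun q : Fin ℓ → Fin 3 =>
          k * 2 ^ ℓ + ∑ i : Fin ℓ, (q i : ℕ) * 2 ^ (ℓ - 1 - (i : ℕ)) = n),
      2 ^ (Finset.univ.filter fun i => q i = 1).card) = gaux k n ℓ := by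
  rw [gaux, Finset.sum_filter]
  refine Finset.sum_congr rfl fun q _ => ?_
  congr 1
  rw [← Finset.prod_const, Finset.prod_filter]

lemma gaux_zero (k n : ℕ) : gaux k n 0 = if k = n then 1 else 0 := by
  simp [gaux]

lemma v_snoc (ℓ : ℕ) (q' : Fin ℓ → Fin 3) (c : Fin 3) :
    ∑ i : Fin (ℓ + 1), ((Fin.snoc q' c : Fin (ℓ + 1) → Fin 3) i : ℕ) * 2 ^ (ℓ - (i : ℕ)) =
      2 * (∑ i : Fin ℓ, (q' i : ℕ) * 2 ^ (ℓ - 1 - (i : ℕ))) + (c : ℕ) := by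
  rw [Fin.sum_univ_castSucc]
  simp only [Fin.snoc_castSucc, Fin.snoc_last, Fin.coe_castSucc, Fin.val_last,
    Nat.sub_self, pow_zero, mul_one]
  rw [Finset.mul_sum]
  congr 1
  refine Finset.sum_congr rfl fun i _ => ?_
  have hi : (i : ℕ) < ℓ := i.isLt
  have : ℓ - (i : ℕ) = (ℓ - 1 - (i : ℕ)) + 1 := by omega
  rw [this, pow_succ]
  ring

lemma u_snoc (ℓ : ℕ) (q' : Fin ℓ → Fin 3) (c : Fin 3) :
    (∏ i : Fin (ℓ + 1), (if (Fin.snoc q' c : Fin (ℓ + 1) → Fin 3) i = 1 then 2 else 1)) =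
      (if c = 1 then 2 else 1) * ∏ i : Fin ℓ, (if q' i = 1 then 2 else 1) := by
  rw [Fin.prod_univ_castSucc]
  simp only [Fin.snoc_castSucc, Fin.snoc_last]
  ring

lemma gaux_snoc (k n ℓ : ℕ) :
    gaux k n (ℓ + 1) =
      ∑ c : Fin 3, ∑ q' : Fin ℓ → Fin 3,
        if k * 2 ^ ℓ * 2 + (2 * (∑ i : Fin ℓ, (q' i : ℕ) * 2 ^ (ℓ - 1 - (i : ℕ))) + (c : ℕ)) = n
        then (if c = 1 then 2 else 1) * ∏ i : Fin ℓ, (if q' i = 1 then 2 else 1) else 0 := by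
  rw [gaux, ← Equiv.sum_comp (Fin.snocEquiv fun _ => Fin 3), Fintype.sum_prod_type]
  refine Finset.sum_congr rfl fun c _ => Finset.sum_congr rfl fun q' _ => ?_
  have h1 : ∀ i : Fin (ℓ + 1), ℓ + 1 - 1 - (i : ℕ) = ℓ - (i : ℕ) := fun i => by omega
  simp only [Fin.snocEquiv_apply, h1]
  rw [v_snoc, u_snoc, pow_succ]
  ring_nf

lemma cond1 (a v m : ℕ) : (a * 2 + (2 * v + 1) = 2 * m + 1) = (a + v = m) := by
  apply propext; omega

lemma cond0 (a v m : ℕ) : (a * 2 + (2 * v + 0) = 2 * m + 2) = (a + v = m + 1) := by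
  apply propext; omega

lemma cond2 (a v m : ℕ) : (a * 2 + (2 * v + 2) = 2 * m + 2) = (a + v = m) := by
  apply propext; omega

lemma gaux_succ_odd (k m ℓ : ℕ) : gaux k (2 * m + 1) (ℓ + 1) = 2 * gaux k m ℓ := by
  rw [gaux_snoc, Fin.sum_univ_three, gaux, Finset.mul_sum]
  have h0 : (∑ q' : Fin ℓ → Fin 3,
      if k * 2 ^ ℓ * 2 + (2 * (∑ i : Fin ℓ, (q' i : ℕ) * 2 ^ (ℓ - 1 - (i : ℕ))) + ((0 : Fin 3) : ℕ)) = 2 * m + 1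
      then (if (0 : Fin 3) = 1 then 2 else 1) * ∏ i : Fin ℓ, (if q' i = 1 then 2 else 1) else 0) = 0 := by
    refine Finset.sum_eq_zero fun q' _ => if_neg ?_
    simp only [show ((0 : Fin 3) : ℕ) = 0 from rfl]
    generalize (∑ i : Fin ℓ, (q' i : ℕ) * 2 ^ (ℓ - 1 - (i : ℕ))) = v
    generalize k * 2 ^ ℓ = a
    omega
  have h2 : (∑ q' : Fin ℓ → Fin 3,
      if k * 2 ^ ℓ * 2 + (2 * (∑ i : Fin ℓ, (q' i : ℕ) * 2 ^ (ℓ - 1 - (i : ℕ))) + ((2 : Fin 3) : ℕ)) = 2 * m + 1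
      then (if (2 : Fin 3) = 1 then 2 else 1) * ∏ i : Fin ℓ, (if q' i = 1 then 2 else 1) else 0) = 0 := by
    refine Finset.sum_eq_zero fun q' _ => if_neg ?_
    clear h0
    simp only [show ((2 : Fin 3) : ℕ) = 2 from rfl]
    generalize (∑ i : Fin ℓ, (q' i : ℕ) * 2 ^ (ℓ - 1 - (i : ℕ))) = v
    generalize k * 2 ^ ℓ = a
    omega
  rw [h0, h2]
  clear h0 h2
  simp only [zero_add, add_zero]
  refine Finset.sum_congr rfl fun q' _ => ?_
  generalize (∑ i : Fin ℓ, (q' i : ℕ) * 2 ^ (ℓ - 1 - (i : ℕ))) = v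
  generalize (∏ i : Fin ℓ, (if q' i = 1 then 2 else 1) : ℕ) = P
  generalize k * 2 ^ ℓ = a
  show (if a * 2 + (2 * v + 1) = 2 * m + 1 then (if (1 : Fin 3) = 1 then 2 else 1) * P else 0)
    = 2 * (if a + v = m then P else 0)
  simp only [cond1]
  split <;> simp [mul_comm]

lemma gaux_succ_even (k m ℓ : ℕ) :
    gaux k (2 * m + 2) (ℓ + 1) = gaux k (m + 1) ℓ + gaux k m ℓ := by
  rw [gaux_snoc, Fin.sum_univ_three]
  have h1 : (∑ q' : Fin ℓ → Fin 3,
      if k * 2 ^ ℓ * 2 + (2 * (∑ i : Fin ℓ, (q' i : ℕ) * 2 ^ (ℓ - 1 - (i : ℕ))) + ((1 : Fin 3) : ℕ)) = 2 * m + 2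
      then (if (1 : Fin 3) = 1 then 2 else 1) * ∏ i : Fin ℓ, (if q' i = 1 then 2 else 1) else 0) = 0 := by
    refine Finset.sum_eq_zero fun q' _ => if_neg ?_
    simp only [show ((1 : Fin 3) : ℕ) = 1 from rfl]
    generalize (∑ i : Fin ℓ, (q' i : ℕ) * 2 ^ (ℓ - 1 - (i : ℕ))) = v
    generalize k * 2 ^ ℓ = a
    omega
  rw [h1, add_zero]
  clear h1
  congr 1
  · rw [gaux]
    refine Finset.sum_congr rfl fun q' _ => ?_
    generalize (∑ i : Fin ℓ, (q' i : ℕ) * 2 ^ (ℓ - 1 - (i : ℕ))) = v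
    generalize (∏ i : Fin ℓ, (if q' i = 1 then 2 else 1) : ℕ) = P
    generalize k * 2 ^ ℓ = a
    show (if a * 2 + (2 * v + 0) = 2 * m + 2 then (if (0 : Fin 3) = 1 then 2 else 1) * P else 0)
      = (if a + v = m + 1 then P else 0)
    simp only [cond0]
    rw [if_neg (by decide : ¬ (0 : Fin 3) = 1)]
    split <;> ring
  · rw [gaux]
    refine Finset.sum_congr rfl fun q' _ => ?_
    generalize (∑ i : Fin ℓ, (q' i : ℕ) * 2 ^ (ℓ - 1 - (i : ℕ))) = v
    generalize (∏ i : Fin ℓ, (if q' i = 1 then 2 else 1) : ℕ) = P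
    generalize k * 2 ^ ℓ = a
    show (if a * 2 + (2 * v + 2) = 2 * m + 2 then (if (2 : Fin 3) = 1 then 2 else 1) * P else 0)
      = (if a + v = m then P else 0)
    simp only [cond2]
    rw [if_neg (by decide : ¬ (2 : Fin 3) = 1)]
    split <;> ring

lemma gaux_vanish (k n ℓ : ℕ) (hk : 0 < k) (h : n < 2 ^ ℓ) : gaux k n ℓ = 0 := by
  rw [gaux]
  refine Finset.sum_eq_zero fun q _ => if_neg ?_
  intro hc
  have : 2 ^ ℓ ≤ k * 2 ^ ℓ := Nat.le_mul_of_pos_left _ hk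
  omega

/-- The total sum as a finite sum. -/
lemma T_eq (k n N : ℕ) (hk : 0 < k) (hN : n < 2 ^ N) :
    (∑ᶠ ℓ : ℕ, gaux k n ℓ) = ∑ ℓ ∈ Finset.range N, gaux k n ℓ := by
  apply finsum_eq_sum_of_support_subset
  intro ℓ hℓ
  simp only [Function.mem_support] at hℓ
  simp only [Finset.coe_range, Set.mem_Iio]
  by_contra hc
  push_neg at hc
  exact hℓ (gaux_vanish k n ℓ hk (lt_of_lt_of_le hN (Nat.pow_le_pow_right (by norm_num) hc)))

lemma main (k : ℕ) (hk : 0 < k) : ∀ n, Multiset.count k (S n) = ∑ᶠ ℓ : ℕ, gaux k n ℓ := by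
  intro n
  induction n using Nat.strong_induction_on with
  | _ n ih =>
    match n with
    | 0 =>
      rw [T_eq k 0 0 hk (by norm_num)]
      simp [S]
    | n + 1 =>
      have hlt : n + 1 < 2 ^ (n + 2) := by
        have := Nat.lt_two_pow_self (n := (n + 1))
        calc n + 1 < 2 ^ (n + 1) := this
          _ ≤ 2 ^ (n + 2) := Nat.pow_le_pow_right (by norm_num) (by omega)
      rw [T_eq k (n + 1) (n + 2) hk hlt, Finset.sum_range_succ']
      rw [S]
      rw [Multiset.count_cons, Multiset.count_add]
      rw [ih (n / 2) (by omega), ih ((n + 1) / 2) (by omega)]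
      have h2 : n / 2 < 2 ^ (n + 1) := by
        have := Nat.lt_two_pow_self (n := (n / 2))
        calc n / 2 < 2 ^ (n / 2) := this
          _ ≤ 2 ^ (n + 1) := Nat.pow_le_pow_right (by norm_num) (by omega)
      have h3 : (n + 1) / 2 < 2 ^ (n + 1) := by
        have := Nat.lt_two_pow_self (n := ((n + 1) / 2))
        calc (n + 1) / 2 < 2 ^ ((n + 1) / 2) := this
          _ ≤ 2 ^ (n + 1) := Nat.pow_le_pow_right (by norm_num) (by omega)
      rw [T_eq k (n / 2) (n + 1) hk h2, T_eq k ((n + 1) / 2) (n + 1) hk h3, gaux_zero]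
      rcases Nat.even_or_odd n with he | ho
      · -- n even : n + 1 = 2 * (n / 2) + 1
        obtain ⟨m, hm⟩ := he
        have hn2 : n / 2 = m := by omega
        have hn12 : (n + 1) / 2 = m := by omega
        have hrw : ∀ ℓ, gaux k (n + 1) (ℓ + 1) = 2 * gaux k m ℓ := fun ℓ => by
          have h : n + 1 = 2 * m + 1 := by omega
          rw [h, gaux_succ_odd]
        rw [hn2, hn12]
        simp only [hrw]
        rw [← Finset.mul_sum]
        generalize (∑ ℓ ∈ Finset.range (n + 1), gaux k m ℓ) = A
        generalize (if k = n + 1 then (1 : ℕ) else 0) = B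
        omega
      · -- n odd : n + 1 = 2 * (n / 2) + 2
        obtain ⟨m, hm⟩ := ho
        have hn2 : n / 2 = m := by omega
        have hn12 : (n + 1) / 2 = m + 1 := by omega
        have hrw : ∀ ℓ, gaux k (n + 1) (ℓ + 1) = gaux k (m + 1) ℓ + gaux k m ℓ := fun ℓ => by
          have h : n + 1 = 2 * m + 2 := by omega
          rw [h, gaux_succ_even]
        rw [hn2, hn12]
        simp only [hrw]
        rw [Finset.sum_add_distrib]
        generalize (∑ ℓ ∈ Finset.range (n + 1), gaux k m ℓ) = A
        generalize (∑ ℓ ∈ Finset.range (n + 1), gaux k (m + 1) ℓ) = A'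
        generalize (if k = n + 1 then (1 : ℕ) else 0) = B
        omega

/-- `#ₖ S(n) = Σ_{ℓ≥0} Σ_{q ∈ Q^ℓ : k·2^ℓ + v(q) = n} 2^(u(q))`, where `Q = {0,1,2}`,
`v(q) = Σᵢ qᵢ 2^(ℓ-i)` and `u(q)` is the number of digits of `q` equal to `1`. -/
theorem stmt3 (n k : ℕ) (hn : 0 < n) (hk : 0 < k) :
    Multiset.count k (S n) =
      ∑ᶠ ℓ : ℕ, ∑ q ∈ Finset.univ.filter
          (fun q : Fin ℓ → Fin 3 =>
            k * 2 ^ ℓ + ∑ i : Fin ℓ, (q i : ℕ) * 2 ^ (ℓ - 1 - (i : ℕ)) = n),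
        2 ^ (Finset.univ.filter fun i => q i = 1).card := by
  rw [main k hk n]
  exact finsum_congr fun ℓ => (gaux_eq k n ℓ).symm
end

section
/- For all integers ℓ ≥ 0 and m ≥ 0, Σ_{q ∈ Q^ℓ : v(q) = m} 2^{u(q)} equals the number of ordered pairs (a, b) of integers with 0 ≤ a < 2^ℓ, 0 ≤ b < 2^ℓ, and a + b = m, where Q = {0,1,2}, and for q = (q_1,…,q_ℓ) ∈ Q^ℓ one defines v(q) = Σ_{i=1}^ℓ q_i·2^{ℓ−i} and u(q) = the number of indices i with q_i = 1. -/
open Finset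

def B (ℓ : ℕ) : (Fin ℓ → Fin 2) ≃ Fin (2 ^ ℓ) :=
  (Equiv.arrowCongr Fin.revPerm (Equiv.refl (Fin 2))).trans finFunctionFinEquiv

lemma B_apply {ℓ : ℕ} (f : Fin ℓ → Fin 2) :
    (B ℓ f : ℕ) = ∑ i : Fin ℓ, (f i : ℕ) * 2 ^ (ℓ - 1 - (i : ℕ)) := by
  have h : (B ℓ f : ℕ) = ∑ i : Fin ℓ, (f (Fin.rev i) : ℕ) * 2 ^ (i : ℕ) := rfl
  rw [h]
  apply Fintype.sum_equiv Fin.revPerm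
  intro i
  simp only [Fin.revPerm_apply, Fin.rev_rev, Fin.val_rev]
  have : ℓ - 1 - (ℓ - ((i:ℕ) + 1)) = (i:ℕ) := by omega
  rw [this]

lemma B_symm_apply {ℓ : ℕ} (a : Fin (2 ^ ℓ)) (i : Fin ℓ) :
    (((B ℓ).symm a) i : ℕ) = (a : ℕ) / 2 ^ (ℓ - 1 - (i : ℕ)) % 2 := by
  have h : (((B ℓ).symm a) i : ℕ) = (a : ℕ) / 2 ^ ((Fin.rev i : Fin ℓ) : ℕ) % 2 := rfl
  rw [h, Fin.val_rev]
  have : ℓ - ((i:ℕ) + 1) = ℓ - 1 - (i:ℕ) := by omega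
  rw [this]

lemma K1 {ℓ : ℕ} (a : ℕ) (ha : a < 2 ^ ℓ) :
    ∑ i : Fin ℓ, (a / 2 ^ (ℓ - 1 - (i : ℕ)) % 2) * 2 ^ (ℓ - 1 - (i : ℕ)) = a := by
  have := B_apply ((B ℓ).symm ⟨a, ha⟩)
  rw [Equiv.apply_symm_apply] at this
  simp only [B_symm_apply] at this
  exact this.symm

lemma L4 {ℓ : ℕ} (f : Fin ℓ → Fin 2) (i : Fin ℓ) :
    (∑ j : Fin ℓ, (f j : ℕ) * 2 ^ (ℓ - 1 - (j : ℕ))) / 2 ^ (ℓ - 1 - (i : ℕ)) % 2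
      = (f i : ℕ) := by
  have h1 := B_symm_apply (B ℓ f) i
  rw [Equiv.symm_apply_apply, B_apply] at h1
  exact h1.symm

lemma L5 : ∀ c : Fin 3,
    (Finset.univ.filter fun p : Fin 2 × Fin 2 => (p.1 : ℕ) + (p.2 : ℕ) = (c : ℕ)).card
      = if c = 1 then 2 else 1 := by decide

lemma Bsum_lt {ℓ : ℕ} (f : Fin ℓ → Fin 2) :
    ∑ j : Fin ℓ, (f j : ℕ) * 2 ^ (ℓ - 1 - (j : ℕ)) < 2 ^ ℓ := by
  rw [← B_apply]; exact (B ℓ f).isLt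

/-- `Σ_{q ∈ Q^ℓ : v(q) = m} 2^(u(q))` equals the number of ordered pairs `(a, b)` of
integers with `0 ≤ a < 2^ℓ`, `0 ≤ b < 2^ℓ` and `a + b = m`. -/
theorem stmt4 (ℓ m : ℕ) :
    ∑ q ∈ Finset.univ.filter
        (fun q : Fin ℓ → Fin 3 => ∑ i : Fin ℓ, (q i : ℕ) * 2 ^ (ℓ - 1 - (i : ℕ)) = m),
      2 ^ (Finset.univ.filter fun i => q i = 1).card =
    ((Finset.range (2 ^ ℓ) ×ˢ Finset.range (2 ^ ℓ)).filter fun ab => ab.1 + ab.2 = m).card := by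
  classical
  set t := Finset.univ.filter
      (fun q : Fin ℓ → Fin 3 => ∑ i : Fin ℓ, (q i : ℕ) * 2 ^ (ℓ - 1 - (i : ℕ)) = m) with ht
  set s := (Finset.range (2 ^ ℓ) ×ˢ Finset.range (2 ^ ℓ)).filter
      (fun ab => ab.1 + ab.2 = m) with hs
  have hF : ∀ ab : ℕ × ℕ, ∀ i : Fin ℓ,
      ab.1 / 2 ^ (ℓ - 1 - (i : ℕ)) % 2 + ab.2 / 2 ^ (ℓ - 1 - (i : ℕ)) % 2 < 3 := by
    intro ab i; omega
  set F : ℕ × ℕ → (Fin ℓ → Fin 3) := fun ab i => ⟨_, hF ab i⟩ with hFdef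
  have hFval : ∀ ab i, (F ab i : ℕ)
      = ab.1 / 2 ^ (ℓ - 1 - (i : ℕ)) % 2 + ab.2 / 2 ^ (ℓ - 1 - (i : ℕ)) % 2 := fun _ _ => rfl
  have hsum : ∀ ab ∈ s, ∑ i : Fin ℓ, (F ab i : ℕ) * 2 ^ (ℓ - 1 - (i : ℕ)) = ab.1 + ab.2 := by
    intro ab hab
    simp only [hs, Finset.mem_filter, Finset.mem_product, Finset.mem_range] at hab
    obtain ⟨⟨h1, h2⟩, _⟩ := hab
    simp only [hFval, add_mul, Finset.sum_add_distrib, K1 ab.1 h1, K1 ab.2 h2]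
  have hmaps : ∀ ab ∈ s, F ab ∈ t := by
    intro ab hab
    have h3 : ab.1 + ab.2 = m := (Finset.mem_filter.mp hab).2
    simp only [ht, Finset.mem_filter, Finset.mem_univ, true_and]
    rw [hsum ab hab, h3]
  rw [Finset.card_eq_sum_card_fiberwise hmaps]
  refine Finset.sum_congr rfl fun q hq => ?_
  have hqm : ∑ i : Fin ℓ, (q i : ℕ) * 2 ^ (ℓ - 1 - (i : ℕ)) = m :=
    (Finset.mem_filter.mp hq).2
  -- fiber card
  have hcard : (s.filter fun ab => F ab = q).card
      = (Fintype.piFinset fun i : Fin ℓ =>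
          Finset.univ.filter fun p : Fin 2 × Fin 2 => (p.1 : ℕ) + (p.2 : ℕ) = (q i : ℕ)).card := by
    refine Finset.card_bij'
      (fun ab _ => fun k => ((⟨ab.1 / 2 ^ (ℓ - 1 - (k : ℕ)) % 2, by omega⟩ : Fin 2),
        (⟨ab.2 / 2 ^ (ℓ - 1 - (k : ℕ)) % 2, by omega⟩ : Fin 2)))
      (fun g _ => (∑ k : Fin ℓ, ((g k).1 : ℕ) * 2 ^ (ℓ - 1 - (k : ℕ)),
        ∑ k : Fin ℓ, ((g k).2 : ℕ) * 2 ^ (ℓ - 1 - (k : ℕ)))) ?_ ?_ ?_ ?_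
    · intro ab hab
      obtain ⟨habs, habF⟩ := Finset.mem_filter.mp hab
      rw [Fintype.mem_piFinset]
      intro k
      simp only [Finset.mem_filter, Finset.mem_univ, true_and]
      have := congrFun habF k
      have hv : (F ab k : ℕ) = (q k : ℕ) := by rw [this]
      rw [hFval] at hv
      exact hv
    · intro g hg
      rw [Fintype.mem_piFinset] at hg
      have hgk : ∀ k, ((g k).1 : ℕ) + ((g k).2 : ℕ) = (q k : ℕ) := by
        intro k
        have := hg k
        simpa using this
      have h1 : ∑ k : Fin ℓ, ((g k).1 : ℕ) * 2 ^ (ℓ - 1 - (k : ℕ)) < 2 ^ ℓ :=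
        Bsum_lt (fun k => (g k).1)
      have h2 : ∑ k : Fin ℓ, ((g k).2 : ℕ) * 2 ^ (ℓ - 1 - (k : ℕ)) < 2 ^ ℓ :=
        Bsum_lt (fun k => (g k).2)
      have hadd : ∑ k : Fin ℓ, ((g k).1 : ℕ) * 2 ^ (ℓ - 1 - (k : ℕ))
          + ∑ k : Fin ℓ, ((g k).2 : ℕ) * 2 ^ (ℓ - 1 - (k : ℕ)) = m := by
        rw [← Finset.sum_add_distrib]
        rw [← hqm]
        refine Finset.sum_congr rfl fun k _ => ?_
        rw [← add_mul, hgk k]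
      refine Finset.mem_filter.mpr ⟨Finset.mem_filter.mpr ⟨?_, hadd⟩, ?_⟩
      · exact Finset.mem_product.mpr ⟨Finset.mem_range.mpr h1, Finset.mem_range.mpr h2⟩
      · funext k
        apply Fin.ext
        rw [hFval]
        have e1 := L4 (fun k => (g k).1) k
        have e2 := L4 (fun k => (g k).2) k
        rw [e1, e2, hgk k]
    · intro ab hab
      obtain ⟨habs, _⟩ := Finset.mem_filter.mp hab
      simp only [hs, Finset.mem_filter, Finset.mem_product, Finset.mem_range] at habs
      obtain ⟨⟨ha1, ha2⟩, _⟩ := habs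
      exact Prod.ext (K1 ab.1 ha1) (K1 ab.2 ha2)
    · intro g hg
      funext k
      have e1 := L4 (fun k => (g k).1) k
      have e2 := L4 (fun k => (g k).2) k
      exact Prod.ext (Fin.ext e1) (Fin.ext e2)
  rw [hcard, Fintype.card_piFinset]
  simp only [L5]
  rw [Finset.prod_ite, Finset.prod_const, Finset.prod_const_one, mul_one]
end

section
/- For every integer n ≥ 1, the number C_1(n) of payphone permutations of type (C1) and size n satisfies C_1(n) = n · G(S(n−1)). -/
open Nat

/-- `G M = (∏_{k≥1} (#₂ₖ M + #₂ₖ₋₁ M)!) · 2^(∑_{k≥2} #₂ₖ M)`. -/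
noncomputable def G (M : Multiset ℕ) : ℕ :=
  (∏ᶠ k ∈ Set.Ici (1 : ℕ), (M.count (2 * k) + M.count (2 * k - 1))!) *
    2 ^ ∑ᶠ k ∈ Set.Ici (2 : ℕ), M.count (2 * k)

/-- The set of positions (numbered `0, …, n-1`) occupied before person `i`
takes a payphone, for the seating sequence `p` (person `j` takes position `p j`). -/
def occSet (n : ℕ) (p : Fin n → Fin n) (i : Fin n) : Set ℕ :=
  {x | ∃ j : Fin n, j < i ∧ (p j : ℕ) = x}

/-- Circular distance between positions `x` and `y` on a circle of `n` payphones. -/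
def cdist (n x y : ℕ) : ℕ := min (Nat.dist x y) (n - Nat.dist x y)

/-- Circular distance from `x` to the occupied set `O`. -/
noncomputable def cdistTo (n : ℕ) (O : Set ℕ) (x : ℕ) : ℕ :=
  sInf {d | ∃ y ∈ O, cdist n x y = d}

namespace PayAux

lemma mem_S_bounds : ∀ m, ∀ x ∈ S m, 1 ≤ x ∧ x ≤ m := by
  intro m
  induction m using Nat.strong_induction_on with
  | _ m ih =>
    match m with
    | 0 => intro x hx; simp [S] at hx
    | k + 1 =>
      intro x hx
      rw [S] at hx
      rcases Multiset.mem_cons.1 hx with h | h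
      · omega
      rcases Multiset.mem_add.1 h with h | h
      · have := ih (k / 2) (by omega) x h; omega
      · have := ih ((k + 1) / 2) (by omega) x h; omega

lemma count_S_high {t m : ℕ} (h : m < t) : (S m).count t = 0 := by
  rw [Multiset.count_eq_zero]
  intro hx
  have := mem_S_bounds m t hx; omega

lemma count_S (t : ℕ) (ht : 3 ≤ t) :
    ∀ m, (m + 1) / 2 ≤ (t + 1) / 2 → (S m).count t = if t = m then 1 else 0 := by
  intro m
  induction m using Nat.strong_induction_on with
  | _ m ih =>
    intro hlev
    match m with
    | 0 => simp only [S, Multiset.count_zero]; rw [if_neg (by omega)]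
    | k + 1 =>
      rw [S, Multiset.count_cons, Multiset.count_add]
      have h1 : (S (k / 2)).count t = if t = k / 2 then 1 else 0 :=
        ih (k / 2) (by omega) (by omega)
      have h2 : (S ((k + 1) / 2)).count t = if t = (k + 1) / 2 then 1 else 0 :=
        ih ((k + 1) / 2) (by omega) (by omega)
      have e1 : t ≠ k / 2 := by omega
      have e2 : t ≠ (k + 1) / 2 := by omega
      rw [h1, h2, if_neg e1, if_neg e2]
      by_cases h : t = k + 1 <;> simp [h]

lemma count_S_small : ∀ m ≤ 2, (S m).count 1 + (S m).count 2 = m := by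
  intro m hm
  interval_cases m
  · simp [S]
  · rw [S]; simp [S]
  · rw [S]; rw [S]; simp [S]

-- G over finite ranges
lemma G_eq_prod (M : Multiset ℕ) (N : ℕ) (hN : ∀ x ∈ M, x ≤ N) :
    G M = (∏ k ∈ Finset.Icc 1 N, (M.count (2 * k) + M.count (2 * k - 1))!) *
      2 ^ ∑ k ∈ Finset.Icc 2 N, M.count (2 * k) := by
  have hcount : ∀ t, N < t → M.count t = 0 := by
    intro t ht
    rw [Multiset.count_eq_zero]
    intro hx; exact absurd (hN t hx) (by omega)
  have h1 : (∏ᶠ k ∈ Set.Ici (1 : ℕ), (M.count (2 * k) + M.count (2 * k - 1))!) =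
      ∏ k ∈ Finset.Icc 1 N, (M.count (2 * k) + M.count (2 * k - 1))! := by
    apply finprod_mem_eq_prod_of_subset
    · intro k hk
      simp only [Set.mem_inter_iff, Set.mem_Ici, Function.mem_mulSupport] at hk
      simp only [Finset.coe_Icc, Set.mem_Icc]
      rcases hk with ⟨hk1, hk2⟩
      refine ⟨hk1, ?_⟩
      by_contra hkN
      rw [hcount (2 * k) (by omega), hcount (2 * k - 1) (by omega)] at hk2
      simp at hk2
    · intro k hk
      simp only [Finset.coe_Icc, Set.mem_Icc] at hk
      exact hk.1
  have h2 : (∑ᶠ k ∈ Set.Ici (2 : ℕ), M.count (2 * k)) =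
      ∑ k ∈ Finset.Icc 2 N, M.count (2 * k) := by
    apply finsum_mem_eq_sum_of_subset
    · intro k hk
      simp only [Set.mem_inter_iff, Set.mem_Ici, Function.mem_support] at hk
      simp only [Finset.coe_Icc, Set.mem_Icc]
      rcases hk with ⟨hk1, hk2⟩
      refine ⟨hk1, ?_⟩
      by_contra hkN
      rw [hcount (2 * k) (by omega)] at hk2
      simp at hk2
    · intro k hk
      simp only [Finset.coe_Icc, Set.mem_Icc] at hk
      exact hk.1
  rw [G, h1, h2]

lemma G_zero : G 0 = 1 := by
  rw [G_eq_prod 0 0 (by simp)]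
  simp

lemma G_erase (T : Multiset ℕ) (m : ℕ) (hm : m ∈ T) (h1 : 1 ≤ m) :
    G T = (T.count (2 * ((m + 1) / 2)) + T.count (2 * ((m + 1) / 2) - 1)) *
      (if m % 2 = 0 ∧ 4 ≤ m then 2 else 1) * G (T.erase m) := by
  have hbound : ∀ x ∈ T, x ≤ T.sum := fun x hx => Multiset.single_le_sum (fun _ _ => Nat.zero_le _) x hx
  obtain ⟨N, hNdef⟩ : ∃ N, T.sum = N := ⟨_, rfl⟩
  rw [hNdef] at hbound
  have hbound' : ∀ x ∈ T.erase m, x ≤ N := fun x hx => hbound x (Multiset.mem_of_mem_erase hx)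
  have hmN : m ≤ N := hbound m hm
  obtain ⟨K, hK⟩ : ∃ K, K = (m + 1) / 2 := ⟨_, rfl⟩
  rw [← hK]
  have hKm : m = 2 * K ∨ m = 2 * K - 1 := by omega
  have hcnt : ∀ t, T.count t = (T.erase m).count t + if t = m then 1 else 0 := by
    intro t
    rcases eq_or_ne t m with rfl | h
    · rw [Multiset.count_erase_self, if_pos rfl]
      have := Multiset.count_pos.mpr hm
      omega
    · rw [Multiset.count_erase_of_ne h, if_neg h]; omega
  rw [G_eq_prod T N hbound, G_eq_prod (T.erase m) N hbound']
  have hKmem : K ∈ Finset.Icc 1 N := by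
    simp only [Finset.mem_Icc]; omega
  rw [← Finset.mul_prod_erase _ _ hKmem, ← Finset.mul_prod_erase _ (fun k => ((T.erase m).count (2 * k) + (T.erase m).count (2 * k - 1))!) hKmem]
  have hprodeq : ∏ k ∈ (Finset.Icc 1 N).erase K, (T.count (2 * k) + T.count (2 * k - 1))! =
      ∏ k ∈ (Finset.Icc 1 N).erase K, ((T.erase m).count (2 * k) + (T.erase m).count (2 * k - 1))! := by
    apply Finset.prod_congr rfl
    intro k hk
    simp only [Finset.mem_erase, Finset.mem_Icc] at hk
    rw [hcnt (2 * k), hcnt (2 * k - 1), if_neg (by omega), if_neg (by omega)]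
    simp
  have hWK : T.count (2 * K) + T.count (2 * K - 1) =
      ((T.erase m).count (2 * K) + (T.erase m).count (2 * K - 1)) + 1 := by
    rw [hcnt (2 * K), hcnt (2 * K - 1)]
    split_ifs <;> omega
  have hsum : ∑ k ∈ Finset.Icc 2 N, T.count (2 * k) =
      (∑ k ∈ Finset.Icc 2 N, (T.erase m).count (2 * k)) + (if m % 2 = 0 ∧ 4 ≤ m then 1 else 0) := by
    have : ∀ k ∈ Finset.Icc 2 N, T.count (2 * k) = (T.erase m).count (2 * k) + (if 2 * k = m then 1 else 0) := fun k _ => hcnt (2 * k)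
    rw [Finset.sum_congr rfl this, Finset.sum_add_distrib]
    congr 1
    by_cases hme : m % 2 = 0 ∧ 4 ≤ m
    · rw [if_pos hme]
      rw [Finset.sum_eq_single_of_mem (m / 2) (Finset.mem_Icc.mpr (by omega))]
      · rw [if_pos (by omega)]
      · intro b _ hb
        rw [if_neg (by omega)]
    · rw [if_neg hme]
      apply Finset.sum_eq_zero
      intro x hx
      simp only [Finset.mem_Icc] at hx
      rw [if_neg (by omega)]
  rw [hprodeq, hWK, hsum, Nat.factorial_succ, pow_add]
  by_cases he : m % 2 = 0 ∧ 4 ≤ m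
  · rw [if_pos he, if_pos he]; ring
  · rw [if_neg he, if_neg he]; ring

end PayAux


namespace PayAux

/-! ### shift arithmetic on the circle -/

def shift (n x d : ℕ) : ℕ := (x + d) % n

lemma shift_lt (hn : 0 < n) : shift n x d < n := Nat.mod_lt _ hn

lemma shift_zero (hx : x < n) : shift n x 0 = x := by
  simp [shift, Nat.mod_eq_of_lt hx]

lemma shift_shift : shift n (shift n x d) e = shift n x (d + e) := by
  simp [shift, Nat.mod_add_mod, Nat.add_assoc]

lemma shift_n (hx : x < n) : shift n x n = x := by
  simp [shift, Nat.add_mod_right, Nat.mod_eq_of_lt hx]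

lemma shift_add_n (hx : x < n) : shift n x (n + d) = shift n x d := by
  rw [← shift_shift (d := n), shift_n hx]

lemma shift_inj (hx : x < n) (h1 : d1 < n) (h2 : d2 < n)
    (h : shift n x d1 = shift n x d2) : d1 = d2 := by
  rcases Nat.le_total d1 d2 with hle | hle
  · have hmod : (x + d1) % n = (x + d2) % n := h
    have hdvd : n ∣ (x + d2) - (x + d1) := (Nat.modEq_iff_dvd' (by omega)).mp hmod
    have : x + d2 - (x + d1) = d2 - d1 := by omega
    rw [this] at hdvd
    have := Nat.eq_zero_of_dvd_of_lt hdvd (by omega)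
    omega
  · have hmod : (x + d2) % n = (x + d1) % n := h.symm
    have hdvd : n ∣ (x + d1) - (x + d2) := (Nat.modEq_iff_dvd' (by omega)).mp hmod
    have : x + d1 - (x + d2) = d1 - d2 := by omega
    rw [this] at hdvd
    have := Nat.eq_zero_of_dvd_of_lt hdvd (by omega)
    omega

/-! ### available positions, distances L and R -/

def avail (n : ℕ) (O : Finset ℕ) : Finset ℕ := Finset.range n \ O

lemma mem_avail {x : ℕ} : x ∈ avail n O ↔ x < n ∧ x ∉ O := by
  simp [avail, Finset.mem_sdiff, Finset.mem_range]

noncomputable def Rt (n : ℕ) (O : Finset ℕ) (x : ℕ) : ℕ :=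
  sInf {d | 0 < d ∧ shift n x d ∈ O}

noncomputable def Lt (n : ℕ) (O : Finset ℕ) (x : ℕ) : ℕ :=
  sInf {d | 0 < d ∧ shift n x (n - d) ∈ O}

/-- Bundle of standing assumptions. -/
structure Conf (n : ℕ) (O : Finset ℕ) : Prop where
  sub : O ⊆ Finset.range n
  ne : O.Nonempty

lemma Conf.lt_n (hC : Conf n O) {y : ℕ} (hy : y ∈ O) : y < n :=
  Finset.mem_range.mp (hC.sub hy)

lemma Conf.n_pos (hC : Conf n O) : 0 < n := by
  obtain ⟨y, hy⟩ := hC.ne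
  have := hC.lt_n hy; omega

lemma R_exists (hC : Conf n O) (hx : x ∈ avail n O) :
    ∃ d, (0 < d ∧ d < n) ∧ shift n x d ∈ O := by
  obtain ⟨y, hy⟩ := hC.ne
  obtain ⟨hxn, hxO⟩ := mem_avail.mp hx
  have hyn := hC.lt_n hy
  rcases Nat.lt_or_ge x y with h | h
  · exact ⟨y - x, ⟨by omega, by omega⟩, by
      have : shift n x (y - x) = y := by
        simp only [shift]; rw [Nat.mod_eq_of_lt (by omega)]; omega
      rw [this]; exact hy⟩
  · have hxy : y < x := by
      rcases Nat.lt_or_ge y x with h' | h'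
      · exact h'
      · exfalso; have : x = y := by omega
        exact hxO (this ▸ hy)
    exact ⟨n - (x - y), ⟨by omega, by omega⟩, by
      have : shift n x (n - (x - y)) = y := by
        simp only [shift]
        have : x + (n - (x - y)) = n + y := by omega
        rw [this, Nat.add_mod_left, Nat.mod_eq_of_lt hyn]
      rw [this]; exact hy⟩

lemma L_exists (hC : Conf n O) (hx : x ∈ avail n O) :
    ∃ d, (0 < d ∧ d < n) ∧ shift n x (n - d) ∈ O := by
  obtain ⟨d, ⟨hd1, hd2⟩, hd3⟩ := R_exists hC hx
  exact ⟨n - d, ⟨by omega, by omega⟩, by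
    have : n - (n - d) = d := by omega
    rw [this]; exact hd3⟩

lemma Rt_spec (hC : Conf n O) (hx : x ∈ avail n O) :
    (0 < Rt n O x ∧ Rt n O x < n) ∧ shift n x (Rt n O x) ∈ O := by
  obtain ⟨d, ⟨hd1, hd2⟩, hd3⟩ := R_exists hC hx
  have hne : {d | 0 < d ∧ shift n x d ∈ O}.Nonempty := ⟨d, hd1, hd3⟩
  have hmem := Nat.sInf_mem hne
  have hle : Rt n O x ≤ d := Nat.sInf_le ⟨hd1, hd3⟩
  exact ⟨⟨hmem.1, by omega⟩, hmem.2⟩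

lemma Rt_min (hC : Conf n O) (hx : x ∈ avail n O) {d : ℕ}
    (hd1 : 0 < d) (hd2 : d < Rt n O x) : shift n x d ∉ O := by
  intro hmem
  have : Rt n O x ≤ d := Nat.sInf_le (show d ∈ {d | 0 < d ∧ shift n x d ∈ O} from ⟨hd1, hmem⟩)
  omega

lemma Lt_spec (hC : Conf n O) (hx : x ∈ avail n O) :
    (0 < Lt n O x ∧ Lt n O x < n) ∧ shift n x (n - Lt n O x) ∈ O := by
  obtain ⟨d, ⟨hd1, hd2⟩, hd3⟩ := L_exists hC hx
  have hne : {d | 0 < d ∧ shift n x (n - d) ∈ O}.Nonempty := ⟨d, hd1, hd3⟩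
  have hmem := Nat.sInf_mem hne
  have hle : Lt n O x ≤ d := Nat.sInf_le ⟨hd1, hd3⟩
  exact ⟨⟨hmem.1, by omega⟩, hmem.2⟩

lemma Lt_min (hC : Conf n O) (hx : x ∈ avail n O) {d : ℕ}
    (hd1 : 0 < d) (hd2 : d < Lt n O x) : shift n x (n - d) ∉ O := by
  intro hmem
  have : Lt n O x ≤ d := Nat.sInf_le (show d ∈ {d | 0 < d ∧ shift n x (n - d) ∈ O} from ⟨hd1, hmem⟩)
  omega

lemma Rt_eq (hC : Conf n O) (hx : x ∈ avail n O) {r : ℕ}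
    (h1 : 0 < r) (h2 : r < n) (h3 : shift n x r ∈ O)
    (h4 : ∀ d, 0 < d → d < r → shift n x d ∉ O) : Rt n O x = r := by
  have hle : Rt n O x ≤ r := Nat.sInf_le ⟨h1, h3⟩
  rcases Nat.lt_or_ge (Rt n O x) r with h | h
  · obtain ⟨⟨hr1, _⟩, hr3⟩ := Rt_spec hC hx
    exact absurd hr3 (h4 _ hr1 h)
  · omega

lemma Lt_eq (hC : Conf n O) (hx : x ∈ avail n O) {l : ℕ}
    (h1 : 0 < l) (h2 : l < n) (h3 : shift n x (n - l) ∈ O)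
    (h4 : ∀ d, 0 < d → d < l → shift n x (n - d) ∉ O) : Lt n O x = l := by
  have hle : Lt n O x ≤ l := Nat.sInf_le ⟨h1, h3⟩
  rcases Nat.lt_or_ge (Lt n O x) l with h | h
  · obtain ⟨⟨hl1, _⟩, hl3⟩ := Lt_spec hC hx
    exact absurd hl3 (h4 _ hl1 h)
  · omega

/-- total length: L + R ≤ n -/
lemma LR_le (hC : Conf n O) (hx : x ∈ avail n O) : Lt n O x + Rt n O x ≤ n := by
  obtain ⟨⟨hl1, hl2⟩, hl3⟩ := Lt_spec hC hx
  obtain ⟨⟨hr1, hr2⟩, hr3⟩ := Rt_spec hC hx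
  by_contra h
  have h1 : 0 < n - Lt n O x := by omega
  have h2 : n - Lt n O x < Rt n O x := by omega
  exact Rt_min hC hx h1 h2 (by
    have : n - (n - (n - Lt n O x)) = n - Lt n O x := by omega
    exact hl3)

end PayAux

namespace PayAux2
open PayAux

variable {n : ℕ} {O : Finset ℕ} {x : ℕ}

/-- walking right inside a gap -/
lemma walk_right (hC : Conf n O) (hx : x ∈ avail n O) {c : ℕ} (hc : c < Rt n O x) :
    shift n x c ∈ avail n O ∧
    Rt n O (shift n x c) = Rt n O x - c ∧ Lt n O (shift n x c) = Lt n O x + c := by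
  obtain ⟨⟨hr1, hr2⟩, hr3⟩ := Rt_spec hC hx
  obtain ⟨⟨hl1, hl2⟩, hl3⟩ := Lt_spec hC hx
  obtain ⟨hxn, hxO⟩ := mem_avail.mp hx
  have hlr := LR_le hC hx
  have hyav : shift n x c ∈ avail n O := by
    rw [mem_avail]
    refine ⟨shift_lt hC.n_pos, ?_⟩
    rcases Nat.eq_zero_or_pos c with rfl | hc0
    · rw [shift_zero hxn]; exact hxO
    · exact Rt_min hC hx hc0 hc
  refine ⟨hyav, ?_, ?_⟩
  · apply Rt_eq hC hyav (by omega) (by omega)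
    · rw [shift_shift]
      have : c + (Rt n O x - c) = Rt n O x := by omega
      rw [this]; exact hr3
    · intro d hd1 hd2
      rw [shift_shift]
      exact Rt_min hC hx (by omega) (by omega)
  · apply Lt_eq hC hyav (by omega) (by omega)
    · rw [shift_shift]
      have : c + (n - (Lt n O x + c)) = n - Lt n O x := by omega
      rw [this]; exact hl3
    · intro d hd1 hd2
      rw [shift_shift]
      rcases Nat.lt_or_ge c d with h | h
      · have : c + (n - d) = n - (d - c) := by omega
        rw [this]
        exact Lt_min hC hx (by omega) (by omega)
      · have : c + (n - d) = n + (c - d) := by omega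
        rw [this, shift_add_n hxn]
        rcases Nat.eq_zero_or_pos (c - d) with h0 | h0
        · rw [h0, shift_zero hxn]; exact hxO
        · exact Rt_min hC hx h0 (by omega)

/-- walking left inside a gap -/
lemma walk_left (hC : Conf n O) (hx : x ∈ avail n O) {c : ℕ} (hc : c < Lt n O x) :
    shift n x (n - c) ∈ avail n O ∧
    Rt n O (shift n x (n - c)) = Rt n O x + c ∧ Lt n O (shift n x (n - c)) = Lt n O x - c := by
  obtain ⟨⟨hr1, hr2⟩, hr3⟩ := Rt_spec hC hx
  obtain ⟨⟨hl1, hl2⟩, hl3⟩ := Lt_spec hC hx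
  obtain ⟨hxn, hxO⟩ := mem_avail.mp hx
  have hlr := LR_le hC hx
  rcases Nat.eq_zero_or_pos c with rfl | hc0
  · have : n - 0 = n := by omega
    rw [this, shift_n hxn]
    exact ⟨hx, by omega, by omega⟩
  have hyav : shift n x (n - c) ∈ avail n O := by
    rw [mem_avail]
    exact ⟨shift_lt hC.n_pos, Lt_min hC hx hc0 hc⟩
  refine ⟨hyav, ?_, ?_⟩
  · apply Rt_eq hC hyav (by omega) (by omega)
    · rw [shift_shift]
      have : n - c + (Rt n O x + c) = n + Rt n O x := by omega
      rw [this, shift_add_n hxn]; exact hr3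
    · intro d hd1 hd2
      rw [shift_shift]
      rcases Nat.lt_or_ge c d with h | h
      · have : n - c + d = n + (d - c) := by omega
        rw [this, shift_add_n hxn]
        exact Rt_min hC hx (by omega) (by omega)
      · have : n - c + d = n - (c - d) := by omega
        rw [this]
        rcases Nat.eq_zero_or_pos (c - d) with h0 | h0
        · rw [h0, Nat.sub_zero, shift_n hxn]; exact hxO
        · exact Lt_min hC hx h0 (by omega)
  · apply Lt_eq hC hyav (by omega) (by omega)
    · rw [shift_shift]
      have : n - c + (n - (Lt n O x - c)) = n + (n - Lt n O x) := by omega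
      rw [this, shift_add_n hxn]; exact hl3
    · intro d hd1 hd2
      rw [shift_shift]
      have : n - c + (n - d) = n + (n - (c + d)) := by omega
      rw [this, shift_add_n hxn]
      exact Lt_min hC hx (by omega) (by omega)

end PayAux2

namespace PayAux3
open PayAux PayAux2

variable {n : ℕ} {O : Finset ℕ} {x e : ℕ}

lemma two_le (hC : Conf n O) (hx : x ∈ avail n O) : 2 ≤ n := by
  obtain ⟨y, hy⟩ := hC.ne
  have h1 := hC.lt_n hy
  obtain ⟨h2, h3⟩ := mem_avail.mp hx
  rcases eq_or_ne x y with rfl | h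
  · exact absurd hy h3
  · omega

def ends (n : ℕ) (O : Finset ℕ) : Finset ℕ :=
  (Finset.range n).filter (fun e => e ∉ O ∧ shift n e (n - 1) ∈ O)

lemma mem_ends : e ∈ ends n O ↔ (e < n ∧ e ∉ O) ∧ shift n e (n - 1) ∈ O := by
  simp [ends, Finset.mem_filter, Finset.mem_range, and_assoc]

lemma ends_avail (he : e ∈ ends n O) : e ∈ avail n O := by
  rw [mem_avail]; exact (mem_ends.mp he).1

lemma Lt_end (hC : Conf n O) (he : e ∈ ends n O) : Lt n O e = 1 := by
  have hav := ends_avail he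
  have h2 := two_le hC hav
  exact Lt_eq hC hav (by omega) (by omega) (mem_ends.mp he).2 (by intro d hd1 hd2; omega)

lemma end_of_Lt_one (hC : Conf n O) (hav : e ∈ avail n O) (h : Lt n O e = 1) :
    e ∈ ends n O := by
  rw [mem_ends]
  obtain ⟨_, hl3⟩ := Lt_spec hC hav
  rw [h] at hl3
  exact ⟨mem_avail.mp hav, hl3⟩

noncomputable def anchor (n : ℕ) (O : Finset ℕ) (x : ℕ) : ℕ :=
  shift n x (n - (Lt n O x - 1))

/-- the anchor of an available position is an end, with the expected data -/
lemma anchor_spec (hC : Conf n O) (hx : x ∈ avail n O) :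
    anchor n O x ∈ ends n O ∧
    Rt n O (anchor n O x) = Lt n O x + Rt n O x - 1 ∧
    shift n (anchor n O x) (Lt n O x - 1) = x := by
  obtain ⟨⟨hl1, hl2⟩, _⟩ := Lt_spec hC hx
  obtain ⟨⟨hr1, hr2⟩, _⟩ := Rt_spec hC hx
  obtain ⟨hxn, _⟩ := mem_avail.mp hx
  obtain ⟨hav, hR, hL⟩ := walk_left hC hx (c := Lt n O x - 1) (by omega)
  simp only [anchor]
  refine ⟨end_of_Lt_one hC hav (by rw [hL]; omega), by rw [hR]; omega, ?_⟩
  rw [shift_shift]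
  have : n - (Lt n O x - 1) + (Lt n O x - 1) = n := by omega
  rw [this, shift_n hxn]

/-- walking right from an end: anchor comes back -/
lemma anchor_of_end (hC : Conf n O) (he : e ∈ ends n O) {c : ℕ} (hc : c < Rt n O e) :
    shift n e c ∈ avail n O ∧ Lt n O (shift n e c) = 1 + c ∧
    Rt n O (shift n e c) = Rt n O e - c ∧ anchor n O (shift n e c) = e := by
  have hav := ends_avail he
  have hLe := Lt_end hC he
  obtain ⟨hav', hR', hL'⟩ := walk_right hC hav hc
  have hen : e < n := (mem_avail.mp hav).1
  refine ⟨hav', by omega, hR', ?_⟩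
  rw [anchor, hL', hLe, shift_shift]
  have : c + (n - (1 + c - 1)) = n := by
    have := LR_le hC hav'
    have := (Lt_spec hC hav').1.2
    rw [hL'] at *
    omega
  rw [this, shift_n hen]

/-- every available position is in the gap of its anchor -/
lemma avail_decomp (hC : Conf n O) (hx : x ∈ avail n O) :
    ∃ e c, e ∈ ends n O ∧ c < Rt n O e ∧ x = shift n e c ∧
      Lt n O x = 1 + c ∧ Rt n O e = Lt n O x + Rt n O x - 1 := by
  obtain ⟨he, hR, hs⟩ := anchor_spec hC hx
  obtain ⟨⟨hl1, _⟩, _⟩ := Lt_spec hC hx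
  obtain ⟨⟨hr1, _⟩, _⟩ := Rt_spec hC hx
  exact ⟨anchor n O x, Lt n O x - 1, he, by omega, hs.symm, by omega, by omega⟩

noncomputable def gapS (n : ℕ) (O : Finset ℕ) : Multiset ℕ :=
  ∑ e ∈ ends n O, S (Rt n O e)

end PayAux3

namespace PayAux4
open PayAux PayAux2 PayAux3

variable {n : ℕ} {O : Finset ℕ} {x e : ℕ}

lemma Conf.insert_avail (hC : Conf n O) (hx : x ∈ avail n O) : Conf n (insert x O) := by
  obtain ⟨hxn, _⟩ := mem_avail.mp hx
  refine ⟨?_, Finset.Nonempty.mono (Finset.subset_insert x O) hC.ne⟩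
  intro y hy
  rcases Finset.mem_insert.mp hy with rfl | hy
  · exact Finset.mem_range.mpr hxn
  · exact hC.sub hy

lemma end_untouched (hC : Conf n O) (hx : x ∈ avail n O)
    (he' : e ∈ ends n O) (hne : e ≠ anchor n O x) :
    e ∈ ends n (insert x O) ∧ Rt n (insert x O) e = Rt n O e := by
  have hC' := Conf.insert_avail hC hx
  have hav := ends_avail he'
  obtain ⟨hen, heO⟩ := mem_avail.mp hav
  have hgap : ∀ c, c < Rt n O e → shift n e c ≠ x := by
    intro c hc hcx
    have h4 := (anchor_of_end hC he' hc).2.2.2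
    rw [hcx] at h4
    obtain ⟨_, _, hse⟩ := anchor_spec hC hx
    exact hne (by rw [← h4])
  have hex : e ≠ x := by
    have := hgap 0 (Rt_spec hC hav).1.1
    rw [shift_zero hen] at this
    exact this
  have hav' : e ∈ avail n (insert x O) := by
    rw [mem_avail]
    exact ⟨hen, by simp [Finset.mem_insert, hex, heO]⟩
  obtain ⟨⟨hr1, hr2⟩, hr3⟩ := Rt_spec hC hav
  constructor
  · rw [mem_ends]
    exact ⟨mem_avail.mp hav', Finset.mem_insert_of_mem (mem_ends.mp he').2⟩
  · apply Rt_eq hC' hav' hr1 hr2 (Finset.mem_insert_of_mem hr3)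
    intro d hd1 hd2
    rw [Finset.mem_insert]
    push_neg
    exact ⟨hgap d (by omega), Rt_min hC hav hd1 hd2⟩

lemma gapS_insert (hC : Conf n O) (hx : x ∈ avail n O) :
    gapS n (insert x O) + S (Lt n O x + Rt n O x - 1) =
      gapS n O + S (Lt n O x - 1) + S (Rt n O x - 1) := by
  obtain ⟨⟨hl1, hl2⟩, hl3⟩ := Lt_spec hC hx
  obtain ⟨⟨hr1, hr2⟩, hr3⟩ := Rt_spec hC hx
  obtain ⟨hxn, hxO⟩ := mem_avail.mp hx
  have hlr := LR_le hC hx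
  have hn2 := two_le hC hx
  have hC' := Conf.insert_avail hC hx
  obtain ⟨he, hRe, hse⟩ := anchor_spec hC hx
  set O' := insert x O with hO'def
  set e := anchor n O x with hedef
  set l := Lt n O x with hldef
  set r := Rt n O x with hrdef
  have hen : e < n := (mem_avail.mp (ends_avail he)).1
  set y1 := shift n x 1 with hy1def
  have hy1n : y1 < n := shift_lt hC.n_pos
  have hy1x : y1 ≠ x := by
    intro h
    have : shift n x 1 = shift n x 0 := by rw [shift_zero hxn]; exact h
    have := shift_inj hxn (by omega) (by omega) this
    omega
  have hxO' : x ∈ O' := Finset.mem_insert_self x O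
  have hy1notend : y1 ∉ ends n O := by
    intro h
    have h2 := (mem_ends.mp h).2
    rw [hy1def, shift_shift] at h2
    have : 1 + (n - 1) = n := by omega
    rw [this, shift_n hxn] at h2
    exact hxO h2
  have hxe : l = 1 → e = x := by
    intro h
    rw [hedef, anchor, ← hldef, h]
    have : n - (1 - 1) = n := by omega
    rw [this, shift_n hxn]
  have hex : 1 < l → e ≠ x := by
    intro h he'
    have : shift n e (l - 1) = shift n e 0 := by rw [shift_zero hen, hse, he']
    have := shift_inj hen (by omega) (by omega) this
    omega
  -- new ends and values
  have heend' : 1 < l → e ∈ ends n (insert x O) ∧ Rt n O' e = l - 1 := by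
    intro hl
    have hav' : e ∈ avail n O' := by
      rw [mem_avail]
      refine ⟨hen, ?_⟩
      rw [Finset.mem_insert]
      push_neg
      exact ⟨hex hl, (mem_avail.mp (ends_avail he)).2⟩
    have hRt : Rt n O' e = l - 1 := by
      apply Rt_eq hC' hav' (by omega) (by omega)
      · rw [hse]; exact hxO'
      · intro d hd1 hd2
        rw [Finset.mem_insert]
        push_neg
        constructor
        · intro hdx
          rw [← hse] at hdx
          have := shift_inj hen (by omega) (by omega) hdx
          omega
        · exact Rt_min hC (ends_avail he) hd1 (by omega)
    refine ⟨?_, hRt⟩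
    rw [mem_ends]
    exact ⟨mem_avail.mp hav', Finset.mem_insert_of_mem (mem_ends.mp he).2⟩
  have hy1end' : 1 < r → y1 ∈ ends n (insert x O) ∧ Rt n O' y1 = r - 1 := by
    intro hr
    have hy1O : y1 ∉ O := Rt_min hC hx (by omega) (by omega)
    have hav' : y1 ∈ avail n O' := by
      rw [mem_avail]
      refine ⟨hy1n, ?_⟩
      rw [Finset.mem_insert]
      push_neg
      exact ⟨hy1x, hy1O⟩
    have hRt : Rt n O' y1 = r - 1 := by
      apply Rt_eq hC' hav' (by omega) (by omega)
      · rw [hy1def, shift_shift]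
        have : 1 + (r - 1) = r := by omega
        rw [this]
        exact Finset.mem_insert_of_mem hr3
      · intro d hd1 hd2
        rw [hy1def, shift_shift, Finset.mem_insert]
        push_neg
        constructor
        · intro hdx
          have : shift n x (1 + d) = shift n x 0 := by rw [shift_zero hxn]; exact hdx
          have := shift_inj hxn (by omega) (by omega) this
          omega
        · exact Rt_min hC hx (by omega) (by omega)
    refine ⟨?_, hRt⟩
    rw [mem_ends]
    refine ⟨mem_avail.mp hav', ?_⟩
    rw [hy1def, shift_shift]
    have : 1 + (n - 1) = n := by omega
    rw [this, shift_n hxn]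
    exact hxO'
  -- description of new ends
  have hEnds : ends n O' = ((ends n O).erase e ∪ (if 1 < l then {e} else ∅)) ∪
      (if 1 < r then {y1} else ∅) := by
    ext y
    simp only [Finset.mem_union, Finset.mem_erase]
    constructor
    · intro hy
      obtain ⟨⟨hyn, hyO'⟩, hyL⟩ := mem_ends.mp hy
      have hyO : y ∉ O := fun h => hyO' (Finset.mem_insert_of_mem h)
      have hyx : y ≠ x := fun h => hyO' (h ▸ hxO')
      rcases Finset.mem_insert.mp hyL with hLx | hLO
      · -- left neighbour is x, so y = y1
        right
        have : y = y1 := by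
          rw [hy1def, ← hLx, shift_shift]
          have : n - 1 + 1 = n := by omega
          rw [this, shift_n hyn]
        have hr' : 1 < r := by
          by_contra h
          have hr1' : r = 1 := by omega
          have : shift n x 1 ∈ O := by rw [← hr1']; exact hr3
          rw [← hy1def] at this
          rw [‹y = y1›] at hyO
          exact hyO this
        rw [if_pos hr', Finset.mem_singleton]
        exact this
      · -- y is an old end
        have hyend : y ∈ ends n O := mem_ends.mpr ⟨⟨hyn, hyO⟩, hLO⟩
        left
        rcases eq_or_ne y e with rfl | hye
        · right
          have hl' : 1 < l := by
            by_contra h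
            have : l = 1 := by omega
            exact hyx (hxe this)
          rw [if_pos hl', Finset.mem_singleton]
        · exact Or.inl ⟨hye, hyend⟩
    · intro hy
      rcases hy with (⟨hye, hyend⟩ | hyBl) | hyBr
      · exact (end_untouched hC hx hyend hye).1
      · rcases Nat.lt_or_ge 1 l with h | h
        · rw [if_pos h, Finset.mem_singleton] at hyBl
          rw [hyBl]; exact (heend' h).1
        · rw [if_neg (by omega)] at hyBl; simp at hyBl
      · rcases Nat.lt_or_ge 1 r with h | h
        · rw [if_pos h, Finset.mem_singleton] at hyBr
          rw [hyBr]; exact (hy1end' h).1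
        · rw [if_neg (by omega)] at hyBr; simp at hyBr
  -- disjointness
  have hd2 : Disjoint ((ends n O).erase e) (if 1 < l then ({e} : Finset ℕ) else ∅) := by
    rcases Nat.lt_or_ge 1 l with h | h
    · rw [if_pos h]
      simp [Finset.disjoint_singleton_right]
    · rw [if_neg (by omega)]; simp
  have hd1 : Disjoint ((ends n O).erase e ∪ (if 1 < l then ({e} : Finset ℕ) else ∅))
      (if 1 < r then ({y1} : Finset ℕ) else ∅) := by
    rcases Nat.lt_or_ge 1 r with h | h
    · rw [if_pos h]
      rw [Finset.disjoint_singleton_right, Finset.mem_union]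
      push_neg
      constructor
      · intro hmem
        exact hy1notend (Finset.mem_of_mem_erase hmem)
      · rcases Nat.lt_or_ge 1 l with h' | h'
        · rw [if_pos h', Finset.mem_singleton]
          intro hy1e
          exact hy1notend (hy1e ▸ he)
        · rw [if_neg (show ¬ (1:ℕ) < l by omega)]; simp
    · rw [if_neg (show ¬ (1:ℕ) < r by omega)]; simp
  -- sums
  have hsum' : gapS n O' = (∑ e' ∈ (ends n O).erase e, S (Rt n O e')) +
      S (l - 1) + S (r - 1) := by
    rw [gapS, hEnds, Finset.sum_union hd1, Finset.sum_union hd2]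
    congr 1
    · congr 1
      · apply Finset.sum_congr rfl
        intro e' he'
        rw [(end_untouched hC hx (Finset.mem_of_mem_erase he') (Finset.ne_of_mem_erase he')).2]
      · rcases Nat.lt_or_ge 1 l with h | h
        · rw [if_pos h, Finset.sum_singleton, (heend' h).2]
        · rw [if_neg (by omega)]
          have : l - 1 = 0 := by omega
          rw [this, Finset.sum_empty]
          simp [S]
    · rcases Nat.lt_or_ge 1 r with h | h
      · rw [if_pos h, Finset.sum_singleton, (hy1end' h).2]
      · rw [if_neg (by omega)]
        have : r - 1 = 0 := by omega
        rw [this, Finset.sum_empty]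
        simp [S]
  have hsum : gapS n O = S (l + r - 1) + ∑ e' ∈ (ends n O).erase e, S (Rt n O e') := by
    rw [gapS, ← Finset.add_sum_erase _ _ he, hRe]
  rw [hsum', hsum]
  abel

end PayAux4

namespace PayAux5
open PayAux PayAux2 PayAux3 PayAux4

variable {n : ℕ} {O : Finset ℕ} {x e : ℕ}

lemma cdist_ge_dd (hC : Conf n O) (hx : x ∈ avail n O) {y : ℕ} (hy : y ∈ O) :
    min (Lt n O x) (Rt n O x) ≤ cdist n x y := by
  obtain ⟨hxn, hxO⟩ := mem_avail.mp hx
  have hyn := hC.lt_n hy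
  have hyx : y ≠ x := fun h => hxO (h ▸ hy)
  rcases Nat.lt_or_ge x y with h | h
  · have hR : Rt n O x ≤ y - x := Nat.sInf_le ⟨by omega, by
      show (x + (y - x)) % n ∈ O
      have : x + (y - x) = y := by omega
      rw [this, Nat.mod_eq_of_lt hyn]; exact hy⟩
    have hL : Lt n O x ≤ n - (y - x) := Nat.sInf_le ⟨by omega, by
      show (x + (n - (n - (y - x)))) % n ∈ O
      have : x + (n - (n - (y - x))) = y := by omega
      rw [this, Nat.mod_eq_of_lt hyn]; exact hy⟩
    simp only [cdist, Nat.dist]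
    omega
  · have hxy : y < x := by omega
    have hL : Lt n O x ≤ x - y := Nat.sInf_le ⟨by omega, by
      show (x + (n - (x - y))) % n ∈ O
      have : x + (n - (x - y)) = n + y := by omega
      rw [this, Nat.add_mod_left, Nat.mod_eq_of_lt hyn]; exact hy⟩
    have hR : Rt n O x ≤ n - (x - y) := Nat.sInf_le ⟨by omega, by
      show (x + (n - (x - y))) % n ∈ O
      have : x + (n - (x - y)) = n + y := by omega
      rw [this, Nat.add_mod_left, Nat.mod_eq_of_lt hyn]; exact hy⟩
    simp only [cdist, Nat.dist]
    omega

lemma cdist_attained (hC : Conf n O) (hx : x ∈ avail n O) :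
    ∃ y ∈ O, cdist n x y = min (Lt n O x) (Rt n O x) := by
  obtain ⟨⟨hl1, hl2⟩, hl3⟩ := Lt_spec hC hx
  obtain ⟨⟨hr1, hr2⟩, hr3⟩ := Rt_spec hC hx
  obtain ⟨hxn, hxO⟩ := mem_avail.mp hx
  have hlr := LR_le hC hx
  rcases Nat.le_total (Rt n O x) (Lt n O x) with h | h
  · refine ⟨shift n x (Rt n O x), hr3, ?_⟩
    rcases Nat.lt_or_ge (x + Rt n O x) n with hc | hc
    · have hs : shift n x (Rt n O x) = x + Rt n O x := Nat.mod_eq_of_lt hc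
      rw [hs]
      simp only [cdist, Nat.dist]
      omega
    · have hs : shift n x (Rt n O x) = x + Rt n O x - n := by
        show (x + Rt n O x) % n = _
        rw [Nat.mod_eq_sub_mod hc, Nat.mod_eq_of_lt (by omega)]
      rw [hs]
      simp only [cdist, Nat.dist]
      omega
  · refine ⟨shift n x (n - Lt n O x), hl3, ?_⟩
    rcases Nat.lt_or_ge x (Lt n O x) with hc | hc
    · have hs : shift n x (n - Lt n O x) = x + n - Lt n O x := by
        show (x + (n - Lt n O x)) % n = _
        rw [Nat.mod_eq_of_lt (by omega)]
        omega
      rw [hs]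
      simp only [cdist, Nat.dist]
      omega
    · have hs : shift n x (n - Lt n O x) = x - Lt n O x := by
        show (x + (n - Lt n O x)) % n = _
        rw [Nat.mod_eq_sub_mod (by omega), Nat.mod_eq_of_lt (by omega)]
        omega
      rw [hs]
      simp only [cdist, Nat.dist]
      omega

lemma cdistTo_eq (hC : Conf n O) (hx : x ∈ avail n O) :
    cdistTo n (↑O) x = min (Lt n O x) (Rt n O x) := by
  obtain ⟨y0, hy0, hc0⟩ := cdist_attained hC hx
  have hmem : (min (Lt n O x) (Rt n O x)) ∈ {d | ∃ y ∈ (↑O : Set ℕ), cdist n x y = d} :=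
    ⟨y0, by simpa using hy0, hc0⟩
  show sInf {d | ∃ y ∈ (↑O : Set ℕ), cdist n x y = d} = _
  apply le_antisymm
  · exact Nat.sInf_le hmem
  · apply le_csInf ⟨_, hmem⟩
    rintro d ⟨y, hy, rfl⟩
    exact cdist_ge_dd hC hx (by simpa using hy)

/-! ### candidates -/

noncomputable def KK (n : ℕ) (O : Finset ℕ) : ℕ :=
  (avail n O).sup (fun x => min (Lt n O x) (Rt n O x))

noncomputable def cand (n : ℕ) (O : Finset ℕ) : Finset ℕ :=
  (avail n O).filter (fun x => min (Lt n O x) (Rt n O x) = KK n O)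

noncomputable def maxEnds (n : ℕ) (O : Finset ℕ) : Finset ℕ :=
  (ends n O).filter (fun e => (Rt n O e + 1) / 2 = KK n O)

noncomputable def mids (n : ℕ) (O : Finset ℕ) (e : ℕ) : Finset ℕ :=
  if Rt n O e = 2 * KK n O then {shift n e (KK n O - 1), shift n e (KK n O)}
  else {shift n e (KK n O - 1)}

/-- each gap level is at most KK -/
lemma lev_le_KK (hC : Conf n O) (he : e ∈ ends n O) :
    (Rt n O e + 1) / 2 ≤ KK n O := by
  have hav := ends_avail he
  obtain ⟨⟨hr1, hr2⟩, _⟩ := Rt_spec hC hav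
  obtain ⟨hx1, hL1, hR1, _⟩ := anchor_of_end hC he (c := (Rt n O e + 1) / 2 - 1) (by omega)
  have := Finset.le_sup (f := fun x => min (Lt n O x) (Rt n O x)) hx1
  rw [hL1, hR1] at this
  calc (Rt n O e + 1) / 2 ≤ min (1 + ((Rt n O e + 1) / 2 - 1)) (Rt n O e - ((Rt n O e + 1) / 2 - 1)) := by omega
  _ ≤ KK n O := this

lemma cand_eq (hC : Conf n O) : cand n O = (maxEnds n O).biUnion (mids n O) := by
  ext x
  simp only [cand, maxEnds, Finset.mem_filter, Finset.mem_biUnion]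
  constructor
  · rintro ⟨hav, hdd⟩
    obtain ⟨e, c, he, hc, rfl, hLx, hRe⟩ := avail_decomp hC hav
    have hlev := lev_le_KK hC he
    obtain ⟨_, hL1, hR1, _⟩ := anchor_of_end hC he hc
    rw [hR1] at hdd
    have hKpos : 0 < KK n O := by omega
    refine ⟨e, ⟨he, by omega⟩, ?_⟩
    rw [mids]
    rcases Nat.eq_or_lt_of_le (show Rt n O e ≤ 2 * KK n O by omega) with heq | hlt
    · rw [if_pos heq]
      simp only [Finset.mem_insert, Finset.mem_singleton]
      have : c = KK n O - 1 ∨ c = KK n O := by omega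
      rcases this with rfl | rfl
      · exact Or.inl rfl
      · exact Or.inr rfl
    · rw [if_neg (by omega)]
      simp only [Finset.mem_singleton]
      have : c = KK n O - 1 := by omega
      rw [this]
  · rintro ⟨e, ⟨he, hlev⟩, hm⟩
    have hav := ends_avail he
    obtain ⟨⟨hr1, hr2⟩, _⟩ := Rt_spec hC hav
    have hKpos : 0 < KK n O := by omega
    rw [mids] at hm
    rcases Nat.lt_or_ge (Rt n O e) (2 * KK n O) with hlt | hge
    · rw [if_neg (by omega)] at hm
      rw [Finset.mem_singleton] at hm
      subst hm
      obtain ⟨hav1, hL1, hR1, _⟩ := anchor_of_end hC he (c := KK n O - 1) (by omega)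
      exact ⟨hav1, by rw [hL1, hR1]; omega⟩
    · have heq : Rt n O e = 2 * KK n O := by omega
      rw [if_pos heq] at hm
      simp only [Finset.mem_insert, Finset.mem_singleton] at hm
      rcases hm with rfl | rfl
      · obtain ⟨hav1, hL1, hR1, _⟩ := anchor_of_end hC he (c := KK n O - 1) (by omega)
        exact ⟨hav1, by rw [hL1, hR1]; omega⟩
      · obtain ⟨hav1, hL1, hR1, _⟩ := anchor_of_end hC he (c := KK n O) (by omega)
        exact ⟨hav1, by rw [hL1, hR1]; omega⟩

lemma mids_spec (hC : Conf n O) (he : e ∈ maxEnds n O) {x : ℕ} (hx : x ∈ mids n O e) :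
    x ∈ avail n O ∧ anchor n O x = e ∧
    Lt n O x + Rt n O x - 1 = Rt n O e := by
  obtain ⟨he', hlev⟩ := Finset.mem_filter.mp he
  have hav := ends_avail he'
  obtain ⟨⟨hr1, hr2⟩, _⟩ := Rt_spec hC hav
  have hKpos : 0 < KK n O := by omega
  rw [mids] at hx
  have hget : ∃ c, c < Rt n O e ∧ x = shift n e c := by
    rcases Nat.lt_or_ge (Rt n O e) (2 * KK n O) with hlt | hge
    · rw [if_neg (by omega), Finset.mem_singleton] at hx
      exact ⟨KK n O - 1, by omega, hx⟩
    · rw [if_pos (by omega)] at hx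
      simp only [Finset.mem_insert, Finset.mem_singleton] at hx
      rcases hx with rfl | rfl
      · exact ⟨KK n O - 1, by omega, rfl⟩
      · exact ⟨KK n O, by omega, rfl⟩
  obtain ⟨c, hc, rfl⟩ := hget
  obtain ⟨hav1, hL1, hR1, ha1⟩ := anchor_of_end hC he' hc
  exact ⟨hav1, ha1, by omega⟩

lemma mids_card (hC : Conf n O) (he : e ∈ maxEnds n O) :
    (mids n O e).card = if Rt n O e = 2 * KK n O then 2 else 1 := by
  obtain ⟨he', hlev⟩ := Finset.mem_filter.mp he
  have hav := ends_avail he'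
  obtain ⟨⟨hr1, hr2⟩, _⟩ := Rt_spec hC hav
  have hKpos : 0 < KK n O := by omega
  have hen : e < n := (mem_avail.mp hav).1
  rw [mids]
  rcases Nat.lt_or_ge (Rt n O e) (2 * KK n O) with hlt | hge
  · rw [if_neg (by omega), if_neg (by omega), Finset.card_singleton]
  · have heq : Rt n O e = 2 * KK n O := by omega
    rw [if_pos heq, if_pos heq]
    rw [Finset.card_insert_of_notMem, Finset.card_singleton]
    rw [Finset.mem_singleton]
    intro hcon
    have := shift_inj hen (show KK n O - 1 < n by omega) (show KK n O < n by omega) hcon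
    omega

end PayAux5

namespace PayAux6
open PayAux PayAux2 PayAux3 PayAux4 PayAux5

variable {n : ℕ} {O : Finset ℕ} {x e : ℕ}

lemma S_one_eq : S 1 = {1} := by
  rw [S]
  simp [S]

lemma S_eq {m : ℕ} (h : 1 ≤ m) : S m = m ::ₘ (S ((m - 1) / 2) + S (m / 2)) := by
  obtain ⟨k, rfl⟩ : ∃ k, m = k + 1 := ⟨m - 1, by omega⟩
  rw [S]
  congr 3 <;> omega

lemma gapS_cand (hC : Conf n O) (hx : x ∈ cand n O) :
    gapS n O = (Lt n O x + Rt n O x - 1) ::ₘ gapS n (insert x O) := by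
  obtain ⟨hav, hdd⟩ := Finset.mem_filter.mp hx
  obtain ⟨⟨hl1, hl2⟩, _⟩ := Lt_spec hC hav
  obtain ⟨⟨hr1, hr2⟩, _⟩ := Rt_spec hC hav
  obtain ⟨he, hRe, _⟩ := anchor_spec hC hav
  have hlev := lev_le_KK hC he
  rw [hRe] at hlev
  have h2 : gapS n (insert x O) + S (Lt n O x + Rt n O x - 1) =
      gapS n O + (S (Lt n O x - 1) + S (Rt n O x - 1)) := by
    rw [← add_assoc]
    exact gapS_insert hC hav
  have hchild : S (Lt n O x - 1) + S (Rt n O x - 1) =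
      S ((Lt n O x + Rt n O x - 1 - 1) / 2) + S ((Lt n O x + Rt n O x - 1) / 2) := by
    have hcase : (Lt n O x - 1 = (Lt n O x + Rt n O x - 1 - 1) / 2 ∧
        Rt n O x - 1 = (Lt n O x + Rt n O x - 1) / 2) ∨
        (Lt n O x - 1 = (Lt n O x + Rt n O x - 1) / 2 ∧
        Rt n O x - 1 = (Lt n O x + Rt n O x - 1 - 1) / 2) := by
      omega
    rcases hcase with ⟨ha, hb⟩ | ⟨ha, hb⟩
    · rw [ha, hb]
    · rw [ha, hb, add_comm]
  rw [hchild, S_eq (show 1 ≤ Lt n O x + Rt n O x - 1 by omega)] at h2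
  rw [Multiset.add_cons, ← Multiset.cons_add] at h2
  exact (add_right_cancel h2).symm

lemma KK_pos (hC : Conf n O) (hne : (avail n O).Nonempty) : 0 < KK n O := by
  obtain ⟨x, hx⟩ := hne
  obtain ⟨⟨hl1, _⟩, _⟩ := Lt_spec hC hx
  obtain ⟨⟨hr1, _⟩, _⟩ := Rt_spec hC hx
  have := Finset.le_sup (f := fun x => min (Lt n O x) (Rt n O x)) hx
  calc 0 < min (Lt n O x) (Rt n O x) := by omega
  _ ≤ KK n O := this

lemma maxEnds_nonempty (hC : Conf n O) (hne : (avail n O).Nonempty) :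
    (maxEnds n O).Nonempty := by
  obtain ⟨x, hx, hsup⟩ := Finset.exists_mem_eq_sup (avail n O) hne
    (fun x => min (Lt n O x) (Rt n O x))
  obtain ⟨he, hRe, _⟩ := anchor_spec hC hx
  have hlev := lev_le_KK hC he
  refine ⟨anchor n O x, Finset.mem_filter.mpr ⟨he, ?_⟩⟩
  have : KK n O = min (Lt n O x) (Rt n O x) := hsup
  rw [hRe]
  omega

lemma maxEnds_lengths (hC : Conf n O) (he : e ∈ maxEnds n O) :
    Rt n O e = 2 * KK n O - 1 ∨ Rt n O e = 2 * KK n O := by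
  obtain ⟨he', hlev⟩ := Finset.mem_filter.mp he
  obtain ⟨⟨hr1, _⟩, _⟩ := Rt_spec hC (ends_avail he')
  omega

/-- the W-count: number of maximal gaps weighted -/
lemma W_eq (hC : Conf n O) (hne : (avail n O).Nonempty) :
    (gapS n O).count (2 * KK n O) + (gapS n O).count (2 * KK n O - 1) =
      ∑ e ∈ maxEnds n O, (if KK n O = 1 then Rt n O e else 1) := by
  have hK := KK_pos hC hne
  have hcount : ∀ t, (gapS n O).count t = ∑ e ∈ ends n O, (S (Rt n O e)).count t := by
    intro t
    rw [gapS]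
    exact Multiset.count_sum'
  rcases Nat.lt_or_ge 1 (KK n O) with hK2 | hK1
  · -- K ≥ 2
    rw [hcount, hcount, ← Finset.sum_add_distrib]
    have : ∀ e ∈ ends n O,
        (S (Rt n O e)).count (2 * KK n O) + (S (Rt n O e)).count (2 * KK n O - 1) =
        if (Rt n O e + 1) / 2 = KK n O then 1 else 0 := by
      intro e he
      have hlev := lev_le_KK hC he
      obtain ⟨⟨hr1, _⟩, _⟩ := Rt_spec hC (ends_avail he)
      rw [count_S (2 * KK n O) (by omega) _ (by omega),
        count_S (2 * KK n O - 1) (by omega) _ (by omega)]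
      split_ifs <;> omega
    rw [Finset.sum_congr rfl this]
    rw [maxEnds, Finset.sum_filter]
    apply Finset.sum_congr rfl
    intro e he
    split_ifs <;> omega
  · -- K = 1
    have hKeq : KK n O = 1 := by omega
    have hmax : maxEnds n O = ends n O := by
      apply Finset.filter_true_of_mem
      intro e he
      have hlev := lev_le_KK hC he
      obtain ⟨⟨hr1, _⟩, _⟩ := Rt_spec hC (ends_avail he)
      omega
    rw [hmax, hcount, hcount, ← Finset.sum_add_distrib]
    apply Finset.sum_congr rfl
    intro e he
    have hlev := lev_le_KK hC he
    obtain ⟨⟨hr1, _⟩, _⟩ := Rt_spec hC (ends_avail he)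
    rw [if_pos hKeq, hKeq]
    have hsmall := count_S_small (Rt n O e) (by omega)
    norm_num
    omega

/-- main step: the sum of G over the splits equals G -/
lemma sum_G_insert (hC : Conf n O) (hne : (avail n O).Nonempty) :
    ∑ x ∈ cand n O, G (gapS n (insert x O)) = G (gapS n O) := by
  have hK := KK_pos hC hne
  set T := gapS n O with hT
  set K := KK n O with hKdef
  set W := T.count (2 * K) + T.count (2 * K - 1) with hW
  -- rewrite sum over biUnion
  have hdisj : Set.PairwiseDisjoint ↑(maxEnds n O) (mids n O) := by
    intro e1 h1 e2 h2 hne12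
    rw [Finset.mem_coe] at h1 h2
    show Disjoint (mids n O e1) (mids n O e2)
    rw [Finset.disjoint_left]
    intro a ha1 ha2
    have hA1 := (mids_spec hC h1 ha1).2.1
    have hA2 := (mids_spec hC h2 ha2).2.1
    exact hne12 (by rw [← hA1, ← hA2])
  rw [cand_eq hC, Finset.sum_biUnion hdisj]
  -- each inner sum is constant
  have hinner : ∀ e ∈ maxEnds n O,
      ∑ x ∈ mids n O e, G (gapS n (insert x O)) =
        (mids n O e).card * G (T.erase (Rt n O e)) := by
    intro e he
    have hconst : ∀ x ∈ mids n O e, G (gapS n (insert x O)) = G (T.erase (Rt n O e)) := by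
      intro x hx
      have hxc : x ∈ cand n O := by
        rw [cand_eq hC]; exact Finset.mem_biUnion.mpr ⟨e, he, hx⟩
      obtain ⟨hav, hanc, hm⟩ := mids_spec hC he hx
      have hgc := gapS_cand hC hxc
      rw [hm] at hgc
      rw [hT, hgc, Multiset.erase_cons_head]
    rw [Finset.sum_congr rfl hconst, Finset.sum_const, smul_eq_mul]
  rw [Finset.sum_congr rfl hinner]
  -- multiply by W
  have hWsum : W = ∑ e ∈ maxEnds n O, (if K = 1 then Rt n O e else 1) := W_eq hC hne
  have hWpos : 0 < W := by
    obtain ⟨e0, he0⟩ := maxEnds_nonempty hC hne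
    rw [hWsum]
    have h1 : 0 < (if K = 1 then Rt n O e0 else 1) := by
      obtain ⟨⟨hr1, _⟩, _⟩ := Rt_spec hC (ends_avail (Finset.mem_filter.mp he0).1)
      split_ifs <;> omega
    calc 0 < (if K = 1 then Rt n O e0 else 1) := h1
    _ ≤ _ := Finset.single_le_sum (f := fun e => if K = 1 then Rt n O e else 1)
      (fun _ _ => Nat.zero_le _) he0
  apply Nat.eq_of_mul_eq_mul_left hWpos
  rw [Finset.mul_sum]
  have hterm : ∀ e ∈ maxEnds n O,
      W * ((mids n O e).card * G (T.erase (Rt n O e))) =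
        (if K = 1 then Rt n O e else 1) * G T := by
    intro e he
    have hlen := maxEnds_lengths hC he
    have hlev : (Rt n O e + 1) / 2 = K := (Finset.mem_filter.mp he).2
    have hmT : Rt n O e ∈ T := by
      obtain ⟨x0, hx0⟩ : (mids n O e).Nonempty := by
        rw [mids]
        split_ifs
        · exact ⟨_, Finset.mem_insert_self _ _⟩
        · exact ⟨_, Finset.mem_singleton_self _⟩
      have hxc : x0 ∈ cand n O := by
        rw [cand_eq hC]; exact Finset.mem_biUnion.mpr ⟨e, he, hx0⟩
      obtain ⟨hav, _, hm⟩ := mids_spec hC he hx0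
      rw [hT, gapS_cand hC hxc, hm]
      exact Multiset.mem_cons_self _ _
    obtain ⟨⟨hr1, _⟩, _⟩ := Rt_spec hC (ends_avail (Finset.mem_filter.mp he).1)
    have hGe := G_erase T (Rt n O e) hmT (by omega)
    rw [hlev] at hGe
    rw [mids_card hC he]
    rcases hlen with hodd | heven
    · -- odd length
      rw [if_neg (by omega)] at hGe ⊢
      rw [hGe, ← hW]
      have : (if K = 1 then Rt n O e else 1) = 1 := by
        split_ifs <;> omega
      rw [this]
      ring
    · -- even length
      rcases Nat.lt_or_ge 1 K with h2 | h1
      · rw [if_pos (by omega)] at hGe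
        rw [if_pos heven, hGe, ← hW, if_neg (by omega)]
        ring
      · -- K = 1, length 2
        have hK1 : K = 1 := by omega
        rw [if_neg (by omega)] at hGe
        rw [if_pos heven, hGe, ← hW, if_pos hK1]
        have : Rt n O e = 2 := by omega
        rw [this]
        ring
  rw [Finset.sum_congr rfl hterm, ← Finset.sum_mul, ← hWsum]

end PayAux6




namespace PayAux7
open PayAux PayAux2 PayAux3 PayAux4 PayAux5 PayAux6

variable {n : ℕ} {O : Finset ℕ} {x : ℕ}

lemma avail_insert (n : ℕ) (O : Finset ℕ) (x : ℕ) :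
    avail n (insert x O) = (avail n O).erase x := by
  ext a
  simp only [avail, Finset.mem_sdiff, Finset.mem_range, Finset.mem_insert, Finset.mem_erase]
  tauto

lemma cand_avail (hx : x ∈ cand n O) : x ∈ avail n O := (Finset.mem_filter.mp hx).1

lemma avail_card_lt (hx : x ∈ cand n O) :
    (avail n (insert x O)).card < (avail n O).card := by
  rw [avail_insert]
  exact Finset.card_erase_lt_of_mem (cand_avail hx)

noncomputable def F (n : ℕ) : Finset ℕ → ℕ
  | O =>
    if (avail n O).Nonempty then
      ∑ x ∈ (cand n O).attach,
        have := avail_card_lt x.2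
        F n (insert x.1 O)
    else 1
  termination_by O => (avail n O).card

noncomputable def seqs (n : ℕ) : Finset ℕ → Finset (List ℕ)
  | O =>
    if (avail n O).Nonempty then
      (cand n O).attach.biUnion (fun x =>
        have := avail_card_lt x.2
        (seqs n (insert x.1 O)).image (List.cons x.1))
    else {[]}
  termination_by O => (avail n O).card

lemma F_empty (h : ¬(avail n O).Nonempty) : F n O = 1 := by
  rw [F, if_neg h]

lemma F_step (h : (avail n O).Nonempty) :
    F n O = ∑ x ∈ (cand n O).attach, F n (insert x.1 O) := by
  rw [F]
  simp only [if_pos h]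

lemma seqs_empty (h : ¬(avail n O).Nonempty) : seqs n O = {[]} := by
  rw [seqs, if_neg h]

lemma seqs_step (h : (avail n O).Nonempty) :
    seqs n O = (cand n O).attach.biUnion
      (fun x => (seqs n (insert x.1 O)).image (List.cons x.1)) := by
  rw [seqs]
  simp only [if_pos h]

lemma seqs_card : ∀ N O, (avail n O).card = N → (seqs n O).card = F n O := by
  intro N
  induction N using Nat.strong_induction_on with
  | _ N ih =>
    intro O hcard
    by_cases h : (avail n O).Nonempty
    · rw [seqs_step h, F_step h]
      rw [Finset.card_biUnion]
      · apply Finset.sum_congr rfl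
        intro x _
        rw [Finset.card_image_of_injective _ (List.cons_injective)]
        exact ih _ (by rw [← hcard]; exact avail_card_lt x.2) _ rfl
      · intro a _ b _ hab
        rw [Function.onFun, Finset.disjoint_left]
        intro l hla hlb
        obtain ⟨la, _, rfl⟩ := Finset.mem_image.mp hla
        obtain ⟨lb, _, hb⟩ := Finset.mem_image.mp hlb
        injection hb with h1 h2
        exact hab (Subtype.ext h1.symm)
    · rw [seqs_empty h, F_empty h, Finset.card_singleton]

/-- the F value of a configuration equals G of its gap multiset -/
lemma F_eq_G : ∀ N O, (avail n O).card = N → Conf n O → F n O = G (gapS n O) := by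
  intro N
  induction N using Nat.strong_induction_on with
  | _ N ih =>
    intro O hcard hC
    by_cases h : (avail n O).Nonempty
    · rw [F_step h]
      calc ∑ x ∈ (cand n O).attach, F n (insert x.1 O)
          = ∑ x ∈ (cand n O).attach, G (gapS n (insert x.1 O)) := by
            apply Finset.sum_congr rfl
            intro x _
            exact ih _ (by rw [← hcard]; exact avail_card_lt x.2) _ rfl
              (Conf.insert_avail hC (cand_avail x.2))
        _ = ∑ x ∈ cand n O, G (gapS n (insert x O)) :=
            Finset.sum_attach _ (fun y => G (gapS n (insert y O)))
        _ = G (gapS n O) := sum_G_insert hC h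
    · rw [F_empty h]
      have hends : ends n O = ∅ := by
        rw [Finset.eq_empty_iff_forall_notMem]
        intro e he
        rw [Finset.not_nonempty_iff_eq_empty] at h
        have := ends_avail he
        rw [h] at this
        exact absurd this (Finset.notMem_empty e)
      rw [gapS, hends, Finset.sum_empty, G_zero]

/-- membership characterisation of seqs -/
lemma mem_seqs_iff {l : List ℕ} (hC : Conf n O) :
    l ∈ seqs n O ↔ (l.length = (avail n O).card ∧
      ∀ k (hk : k < l.length), l.get ⟨k, hk⟩ ∈ cand n (O ∪ (l.take k).toFinset)) := by
  induction l generalizing O with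
  | nil =>
    by_cases h : (avail n O).Nonempty
    · rw [seqs_step h]
      simp only [Finset.mem_biUnion, Finset.mem_image]
      constructor
      · rintro ⟨x, _, l', _, hcons⟩
        exact absurd hcons (by simp)
      · rintro ⟨hlen, _⟩
        exfalso
        have := Finset.card_pos.mpr h
        simp at hlen
        omega
    · rw [seqs_empty h]
      simp only [Finset.mem_singleton]
      rw [Finset.not_nonempty_iff_eq_empty] at h
      simp [h]
  | cons x l' ihl =>
    by_cases h : (avail n O).Nonempty
    · rw [seqs_step h]
      simp only [Finset.mem_biUnion, Finset.mem_image, Finset.mem_attach, true_and,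
        Subtype.exists]
      constructor
      · rintro ⟨a, ha, la, hla, hcons⟩
        rw [List.cons_eq_cons] at hcons
        obtain ⟨h1, h2⟩ := hcons
        subst h1
        subst h2
        have hC' : Conf n (insert a O) := Conf.insert_avail hC (cand_avail ha)
        obtain ⟨hlen, hsteps⟩ := (ihl hC').mp hla
        constructor
        · simp only [List.length_cons, hlen, avail_insert]
          rw [Finset.card_erase_of_mem (cand_avail ha)]
          have := Finset.card_pos.mpr ⟨_, cand_avail ha⟩
          omega
        · intro k hk
          match k with
          | 0 =>
            simp only [List.get, List.take_zero, List.toFinset_nil, Finset.union_empty]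
            exact ha
          | k + 1 =>
            have hk' : k < la.length := by simpa using hk
            have hgoal := hsteps k hk'
            simp only [List.get, List.take_succ_cons, List.toFinset_cons]
            have hset : O ∪ insert a (la.take k).toFinset =
                insert a O ∪ (la.take k).toFinset := by
              ext b
              simp only [Finset.mem_union, Finset.mem_insert]
              tauto
            rw [hset]
            exact hgoal
      · rintro ⟨hlen, hsteps⟩
        have hx : x ∈ cand n O := by
          have := hsteps 0 (by simp)
          simpa using this
        refine ⟨x, hx, l', ?_, rfl⟩
        have hC' : Conf n (insert x O) := Conf.insert_avail hC (cand_avail hx)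
        rw [ihl hC']
        constructor
        · simp only [List.length_cons] at hlen
          rw [avail_insert, Finset.card_erase_of_mem (cand_avail hx)]
          omega
        · intro k hk
          have := hsteps (k + 1) (by simpa using Nat.succ_lt_succ hk)
          simp only [List.get, List.take_succ_cons, List.toFinset_cons] at this
          have hset : O ∪ insert x (l'.take k).toFinset =
              insert x O ∪ (l'.take k).toFinset := by
            ext a
            simp only [Finset.mem_union, Finset.mem_insert]
            tauto
          rw [hset] at this
          exact this
    · rw [seqs_empty h]
      simp only [Finset.mem_singleton]
      constructor
      · intro hcon; exact absurd hcon (by simp)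
      · rintro ⟨hlen, _⟩
        exfalso
        rw [Finset.not_nonempty_iff_eq_empty] at h
        rw [h] at hlen
        simp at hlen

end PayAux7


namespace PayAux8
open PayAux PayAux2 PayAux3 PayAux4 PayAux5 PayAux6 PayAux7

variable {n : ℕ} {O : Finset ℕ} {x y r : ℕ}

lemma conf_singleton (hr : r < n) : Conf n {r} :=
  ⟨by simpa using hr, ⟨r, Finset.mem_singleton_self r⟩⟩

lemma avail_singleton_card (hr : r < n) : (avail n {r}).card = n - 1 := by
  rw [avail, Finset.card_sdiff_of_subset (by simpa using hr)]
  simp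

lemma gapS_singleton (hr : r < n) : gapS n {r} = S (n - 1) := by
  rcases Nat.lt_or_ge n 2 with h2 | h2
  · -- n = 1
    have hn1 : n = 1 := by omega
    subst hn1
    have hr0 : r = 0 := by omega
    subst hr0
    have hends : ends 1 {0} = ∅ := by
      rw [Finset.eq_empty_iff_forall_notMem]
      intro e he
      obtain ⟨⟨he1, he2⟩, _⟩ := mem_ends.mp he
      rw [Finset.mem_singleton] at he2
      omega
    rw [gapS, hends, Finset.sum_empty]
    simp [S]
  · have hC := conf_singleton hr
    have hrr : shift n (shift n r 1) (n - 1) = r := by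
      rw [shift_shift]
      have : 1 + (n - 1) = n := by omega
      rw [this, shift_n hr]
    have hne : shift n r 1 ≠ r := by
      intro h
      have : shift n r 1 = shift n r 0 := by rw [shift_zero hr]; exact h
      have := shift_inj hr (by omega) (by omega) this
      omega
    have havr : shift n r 1 ∈ avail n {r} := by
      rw [mem_avail]
      exact ⟨shift_lt (by omega), by simpa using hne⟩
    have hends : ends n {r} = {shift n r 1} := by
      ext e
      rw [mem_ends]
      constructor
      · rintro ⟨⟨hen, heO⟩, hL⟩
        rw [Finset.mem_singleton] at hL ⊢
        rw [← hL, shift_shift]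
        have hn1 : n - 1 + 1 = n := by omega
        rw [hn1, shift_n hen]
      · intro he
        rw [Finset.mem_singleton] at he
        subst he
        exact ⟨⟨shift_lt (by omega), by simpa using hne⟩, by rw [hrr]; simp⟩
    have hRt : Rt n {r} (shift n r 1) = n - 1 := by
      apply Rt_eq hC havr (by omega) (by omega)
      · rw [hrr]; simp
      · intro d hd1 hd2
        rw [shift_shift, Finset.mem_singleton]
        intro h
        have : shift n r (1 + d) = shift n r 0 := by rw [shift_zero hr]; exact h
        have := shift_inj hr (by omega) (by omega) this
        omega
    rw [gapS, hends, Finset.sum_singleton, hRt]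

noncomputable def topSeqs (n : ℕ) : Finset (List ℕ) :=
  (Finset.range n).biUnion (fun r => (seqs n {r}).image (List.cons r))

lemma topSeqs_card (hn : 1 ≤ n) : (topSeqs n).card = n * G (S (n - 1)) := by
  rw [topSeqs, Finset.card_biUnion]
  · have hterm : ∀ r ∈ Finset.range n,
        ((seqs n {r}).image (List.cons r)).card = G (S (n - 1)) := by
      intro r hr
      rw [Finset.mem_range] at hr
      rw [Finset.card_image_of_injective _ (List.cons_injective),
        seqs_card _ _ rfl, F_eq_G _ _ rfl (conf_singleton hr), gapS_singleton hr]
    rw [Finset.sum_congr rfl hterm, Finset.sum_const, Finset.card_range, smul_eq_mul]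
  · intro a _ b _ hab
    rw [Function.onFun, Finset.disjoint_left]
    intro l hla hlb
    obtain ⟨la, _, rfl⟩ := Finset.mem_image.mp hla
    obtain ⟨lb, _, hb⟩ := Finset.mem_image.mp hlb
    injection hb with h1 h2
    exact hab h1.symm

/-- bridge between the `cdistTo` maximality condition and membership in `cand` -/
lemma cond_to_cand (hC : Conf n O) (hy : y ∈ avail n O)
    (h : ∀ q : ℕ, q < n → q ∉ (↑O : Set ℕ) → cdistTo n ↑O q ≤ cdistTo n ↑O y) :
    y ∈ cand n O := by
  rw [cand, Finset.mem_filter]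
  refine ⟨hy, le_antisymm (Finset.le_sup (f := fun x => min (Lt n O x) (Rt n O x)) hy) ?_⟩
  apply Finset.sup_le
  intro q hq
  rw [← cdistTo_eq hC hq, ← cdistTo_eq hC hy]
  obtain ⟨hqn, hqO⟩ := mem_avail.mp hq
  exact h q hqn (by simpa using hqO)

lemma cand_to_cond (hC : Conf n O) (hy : y ∈ cand n O) :
    ∀ q : ℕ, q < n → q ∉ (↑O : Set ℕ) → cdistTo n ↑O q ≤ cdistTo n ↑O y := by
  intro q hqn hqO
  have hq : q ∈ avail n O := mem_avail.mpr ⟨hqn, by simpa using hqO⟩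
  obtain ⟨hyav, hdd⟩ := Finset.mem_filter.mp hy
  rw [cdistTo_eq hC hq, cdistTo_eq hC hyav]
  rw [hdd]
  exact Finset.le_sup (f := fun x => min (Lt n O x) (Rt n O x)) hq

end PayAux8

/-- Rule (C1): circular variant of (P1). -/
noncomputable def IsC1 (n : ℕ) (p : Fin n → Fin n) : Prop :=
  Function.Bijective p ∧ ∀ i : Fin n, 0 < (i : ℕ) →
    ∀ q : ℕ, q < n → q ∉ occSet n p i →
      cdistTo n (occSet n p i) q ≤ cdistTo n (occSet n p i) (p i)


namespace PayAux9
open PayAux PayAux2 PayAux3 PayAux4 PayAux5 PayAux6 PayAux7 PayAux8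

lemma mem_take_ofFn {N : ℕ} (f : Fin N → ℕ) (k x : ℕ) :
    x ∈ ((List.ofFn f).take k).toFinset ↔ ∃ j : Fin N, (j : ℕ) < k ∧ f j = x := by
  rw [List.mem_toFinset, List.mem_take_iff_getElem]
  constructor
  · rintro ⟨i, hi, hg⟩
    have hiN : i < N := by
      have h2 := hi
      rw [Nat.lt_min, List.length_ofFn] at h2
      exact h2.2
    refine ⟨⟨i, hiN⟩, ?_, ?_⟩
    · have h2 := hi
      rw [Nat.lt_min] at h2
      exact h2.1
    · rw [List.getElem_ofFn] at hg
      exact hg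
  · rintro ⟨j, hj, rfl⟩
    refine ⟨(j : ℕ), ?_, ?_⟩
    · rw [Nat.lt_min, List.length_ofFn]
      exact ⟨hj, j.2⟩
    · rw [List.getElem_ofFn]

lemma occSet_eq (n : ℕ) (p : Fin n → Fin n) (i : Fin n) :
    occSet n p i = ↑(((List.ofFn (fun j => ((p j : ℕ)))).take (i : ℕ)).toFinset) := by
  ext x
  simp only [occSet, Set.mem_setOf_eq, Finset.mem_coe]
  rw [mem_take_ofFn]
  constructor
  · rintro ⟨j, hj, hx⟩
    exact ⟨j, hj, hx⟩
  · rintro ⟨j, hj, hx⟩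
    exact ⟨j, hj, hx⟩

lemma prefix_conf {n : ℕ} (p : Fin n → Fin n) (k : ℕ) (hk : 0 < k) (hn : 0 < n) :
    Conf n (((List.ofFn (fun j => ((p j : ℕ)))).take k).toFinset) := by
  constructor
  · intro y hy
    obtain ⟨j, _, rfl⟩ := (mem_take_ofFn _ _ _).mp hy
    exact Finset.mem_range.mpr (p j).2
  · exact ⟨(p ⟨0, hn⟩ : ℕ), (mem_take_ofFn _ _ _).mpr ⟨⟨0, hn⟩, hk, rfl⟩⟩

/-- direction A: every IsC1 sequence gives a list in topSeqs -/
lemma listOf_mem_topSeqs {m : ℕ} (p : Fin (m + 1) → Fin (m + 1)) (hp : IsC1 (m + 1) p) :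
    List.ofFn (fun i => ((p i : ℕ))) ∈ topSeqs (m + 1) := by
  obtain ⟨hbij, hcond⟩ := hp
  rw [List.ofFn_succ, topSeqs, Finset.mem_biUnion]
  refine ⟨(p 0 : ℕ), Finset.mem_range.mpr (p 0).2, Finset.mem_image.mpr ⟨_, ?_, rfl⟩⟩
  rw [mem_seqs_iff (conf_singleton (p 0).2)]
  constructor
  · rw [List.length_ofFn, avail_singleton_card (p 0).2]
    omega
  · intro k hk
    have hkm : k < m := by
      rw [List.length_ofFn] at hk
      exact hk
    set i : Fin (m + 1) := ⟨k + 1, by omega⟩ with hidef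
    have hget : (List.ofFn (fun i : Fin m => (p i.succ : ℕ))).get ⟨k, hk⟩ = (p i : ℕ) := by
      rw [List.get_ofFn]
      congr 1
    rw [hget]
    have hpre : ({(p 0 : ℕ)} : Finset ℕ) ∪
        ((List.ofFn (fun i : Fin m => (p i.succ : ℕ))).take k).toFinset
        = ((List.ofFn (fun j : Fin (m + 1) => (p j : ℕ))).take (k + 1)).toFinset := by
      ext x
      rw [Finset.mem_union, mem_take_ofFn, mem_take_ofFn, Finset.mem_singleton]
      constructor
      · rintro (rfl | ⟨j, hj, rfl⟩)
        · exact ⟨0, by simp, rfl⟩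
        · exact ⟨j.succ, by rw [Fin.val_succ]; omega, rfl⟩
      · rintro ⟨j, hj, rfl⟩
        rcases Nat.eq_zero_or_pos (j : ℕ) with h0 | h0
        · left
          have hj0 : j = 0 := Fin.ext (by simpa using h0)
          rw [hj0]
        · right
          refine ⟨⟨(j : ℕ) - 1, by omega⟩, by show (j : ℕ) - 1 < k; omega, ?_⟩
          have hjs : (⟨(j : ℕ) - 1, by omega⟩ : Fin m).succ = j :=
            Fin.ext (by show ((j : ℕ) - 1) + 1 = (j : ℕ); omega)
          rw [hjs]
    rw [hpre]
    have hC : Conf (m + 1) (((List.ofFn (fun j : Fin (m + 1) => (p j : ℕ))).take (k + 1)).toFinset) :=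
      prefix_conf p (k + 1) (by omega) (by omega)
    have hyav : (p i : ℕ) ∈ avail (m + 1)
        (((List.ofFn (fun j : Fin (m + 1) => (p j : ℕ))).take (k + 1)).toFinset) := by
      rw [mem_avail]
      refine ⟨(p i).2, ?_⟩
      rw [mem_take_ofFn]
      rintro ⟨j, hj, hx⟩
      have : j = i := hbij.1 (Fin.ext hx)
      rw [this] at hj
      simp [hidef] at hj
    apply cond_to_cand hC hyav
    have hc := hcond i (by simp [hidef])
    rw [occSet_eq] at hc
    exact hc

/-- direction B: every list in topSeqs comes from an IsC1 sequence -/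
lemma topSeqs_sound {m : ℕ} {l : List ℕ} (hl : l ∈ topSeqs (m + 1)) :
    ∃ p : Fin (m + 1) → Fin (m + 1), IsC1 (m + 1) p ∧
      List.ofFn (fun i => ((p i : ℕ))) = l := by
  rw [topSeqs, Finset.mem_biUnion] at hl
  obtain ⟨r, hr, hl⟩ := hl
  rw [Finset.mem_range] at hr
  obtain ⟨l0, hl0, rfl⟩ := Finset.mem_image.mp hl
  rw [mem_seqs_iff (conf_singleton hr)] at hl0
  obtain ⟨hlen, hsteps⟩ := hl0
  rw [avail_singleton_card hr] at hlen
  simp only [Nat.add_sub_cancel] at hlen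
  have hLen : (r :: l0).length = m + 1 := by simp [hlen]
  -- entries bound
  have hbnd : ∀ k (hk : k < (r :: l0).length), (r :: l0).get ⟨k, hk⟩ < m + 1 := by
    intro k hk
    match k with
    | 0 => exact hr
    | k + 1 =>
      have hk' : k < l0.length := by simpa using hk
      have := cand_avail (hsteps k hk')
      rw [mem_avail] at this
      exact this.1
  set p : Fin (m + 1) → Fin (m + 1) :=
    fun i => ⟨(r :: l0).get ⟨(i : ℕ), by rw [hLen]; exact i.2⟩,
      hbnd (i : ℕ) (by rw [hLen]; exact i.2)⟩ with hpdef
  have hlist : List.ofFn (fun i => ((p i : ℕ))) = r :: l0 := by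
    apply List.ext_get (by rw [List.length_ofFn, List.length_cons, hlen])
    intro k h1 h2
    rw [List.get_ofFn]
    rfl
  -- prefix identification
  have hpre : ∀ k, k < m + 1 →
      ((List.ofFn (fun j => ((p j : ℕ)))).take (k + 1)).toFinset =
        ({r} : Finset ℕ) ∪ (l0.take k).toFinset := by
    intro k _
    rw [hlist]
    rw [List.take_succ_cons, List.toFinset_cons, Finset.insert_eq]
  -- injectivity
  have hinj : Function.Injective p := by
    intro i j hij
    by_contra hne
    have hvals : (r :: l0).get ⟨(i : ℕ), by rw [hLen]; exact i.2⟩ =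
        (r :: l0).get ⟨(j : ℕ), by rw [hLen]; exact j.2⟩ := congrArg Fin.val hij
    -- wlog i < j
    rcases Nat.lt_or_ge (i : ℕ) (j : ℕ) with hij' | hij'
    case _ =>
      have hj1 : 1 ≤ (j : ℕ) := by omega
      have hkj : (j : ℕ) - 1 < l0.length := by rw [hlen]; omega
      have hcj := hsteps ((j : ℕ) - 1) hkj
      have hgetj : l0.get ⟨(j : ℕ) - 1, hkj⟩ =
          (r :: l0).get ⟨(j : ℕ), by rw [hLen]; exact j.2⟩ := by
        have h' : (⟨(j : ℕ), by rw [hLen]; exact j.2⟩ : Fin (r :: l0).length) =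
            ⟨((j : ℕ) - 1) + 1, by rw [hLen]; omega⟩ :=
          Fin.ext (by show (j : ℕ) = ((j : ℕ) - 1) + 1; omega)
        rw [h']
        rfl
      have havj := cand_avail hcj
      rw [mem_avail] at havj
      apply havj.2
      rw [Finset.mem_union]
      rcases Nat.eq_zero_or_pos (i : ℕ) with h0 | h0
      · left
        rw [Finset.mem_singleton, hgetj, ← hvals]
        have : (⟨(i : ℕ), by rw [hLen]; exact i.2⟩ : Fin (r :: l0).length) =
            ⟨0, by rw [hLen]; omega⟩ := Fin.ext h0
        rw [this]
        rfl
      · right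
        rw [List.mem_toFinset, List.mem_take_iff_getElem]
        refine ⟨(i : ℕ) - 1, by rw [Nat.lt_min]; omega, ?_⟩
        show l0.get ⟨(i : ℕ) - 1, by rw [hlen]; omega⟩ = _
        rw [hgetj, ← hvals]
        have : (⟨(i : ℕ), by rw [hLen]; exact i.2⟩ : Fin (r :: l0).length) =
            ⟨((i : ℕ) - 1) + 1, by rw [hLen]; omega⟩ :=
          Fin.ext (by show (i : ℕ) = ((i : ℕ) - 1) + 1; omega)
        rw [this]
        rfl
    case _ =>
      have hij'' : (j : ℕ) < (i : ℕ) := by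
        rcases Nat.lt_or_ge (j : ℕ) (i : ℕ) with h | h
        · exact h
        · exact absurd (Fin.ext (by omega : (i : ℕ) = (j : ℕ))) hne
      have hi1 : 1 ≤ (i : ℕ) := by omega
      have hki : (i : ℕ) - 1 < l0.length := by rw [hlen]; omega
      have hci := hsteps ((i : ℕ) - 1) hki
      have hgeti : l0.get ⟨(i : ℕ) - 1, hki⟩ =
          (r :: l0).get ⟨(i : ℕ), by rw [hLen]; exact i.2⟩ := by
        have h' : (⟨(i : ℕ), by rw [hLen]; exact i.2⟩ : Fin (r :: l0).length) =
            ⟨((i : ℕ) - 1) + 1, by rw [hLen]; omega⟩ :=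
          Fin.ext (by show (i : ℕ) = ((i : ℕ) - 1) + 1; omega)
        rw [h']
        rfl
      have havi := cand_avail hci
      rw [mem_avail] at havi
      apply havi.2
      rw [Finset.mem_union]
      rcases Nat.eq_zero_or_pos (j : ℕ) with h0 | h0
      · left
        rw [Finset.mem_singleton, hgeti, hvals]
        have : (⟨(j : ℕ), by rw [hLen]; exact j.2⟩ : Fin (r :: l0).length) =
            ⟨0, by rw [hLen]; omega⟩ := Fin.ext h0
        rw [this]
        rfl
      · right
        rw [List.mem_toFinset, List.mem_take_iff_getElem]
        refine ⟨(j : ℕ) - 1, by rw [Nat.lt_min]; omega, ?_⟩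
        show l0.get ⟨(j : ℕ) - 1, by rw [hlen]; omega⟩ = _
        rw [hgeti, hvals]
        have : (⟨(j : ℕ), by rw [hLen]; exact j.2⟩ : Fin (r :: l0).length) =
            ⟨((j : ℕ) - 1) + 1, by rw [hLen]; omega⟩ :=
          Fin.ext (by show (j : ℕ) = ((j : ℕ) - 1) + 1; omega)
        rw [this]
        rfl
  refine ⟨p, ⟨Finite.injective_iff_bijective.mp hinj, ?_⟩, hlist⟩
  -- the C1 condition
  intro i hi q hq hqocc
  have hk : (i : ℕ) - 1 < l0.length := by rw [hlen]; omega
  have hstep := hsteps ((i : ℕ) - 1) hk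
  have hgeti : l0.get ⟨(i : ℕ) - 1, hk⟩ = (p i : ℕ) := by
    show _ = (r :: l0).get ⟨(i : ℕ), by rw [hLen]; exact i.2⟩
    have : (⟨(i : ℕ), by rw [hLen]; exact i.2⟩ : Fin (r :: l0).length) =
        ⟨((i : ℕ) - 1) + 1, by rw [hLen]; omega⟩ :=
      Fin.ext (by show (i : ℕ) = ((i : ℕ) - 1) + 1; omega)
    rw [this]
    rfl
  rw [hgeti] at hstep
  have hieq : ((i : ℕ) - 1) + 1 = (i : ℕ) := by omega
  have hOeq : ({r} : Finset ℕ) ∪ (l0.take ((i : ℕ) - 1)).toFinset =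
      ((List.ofFn (fun j => ((p j : ℕ)))).take (i : ℕ)).toFinset := by
    rw [← hieq, hpre ((i : ℕ) - 1) (by have := i.2; omega)]
    simp
  rw [hOeq] at hstep
  rw [occSet_eq] at hqocc ⊢
  exact cand_to_cond (prefix_conf p (i : ℕ) (by omega) (by omega)) hstep q hq hqocc

end PayAux9

/-- The number of distinct payphone permutations `π` (defined by `π (p i) = i`)
arising from seating sequences `p` of the type `T`. -/
noncomputable def payCount (n : ℕ) (T : (Fin n → Fin n) → Prop) : ℕ :=
  Nat.card {π : Equiv.Perm (Fin n) // ∃ p : Fin n → Fin n, T p ∧ ∀ i, π (p i) = i}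

/-- Theorem 3: `C₁(n) = n · G(S(n−1))`. -/
theorem stmt8 (n : ℕ) (hn : 1 ≤ n) :
    payCount n (IsC1 n) = n * G (S (n - 1)) := by
  obtain ⟨m, rfl⟩ : ∃ m, n = m + 1 := ⟨n - 1, by omega⟩
  rw [← PayAux8.topSeqs_card (show 1 ≤ m + 1 by omega)]
  rw [payCount]
  have h1 : ∀ π : Equiv.Perm (Fin (m + 1)),
      (∃ p : Fin (m + 1) → Fin (m + 1), IsC1 (m + 1) p ∧ ∀ i, π (p i) = i) ↔
        IsC1 (m + 1) ⇑π.symm := by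
    intro π
    constructor
    · rintro ⟨p, hp, hpi⟩
      have hpe : p = ⇑π.symm := by
        funext i
        have h2 : π.symm (π (p i)) = π.symm i := congrArg π.symm (hpi i)
        rwa [Equiv.symm_apply_apply] at h2
      rwa [hpe] at hp
    · intro h
      exact ⟨⇑π.symm, h, fun i => π.apply_symm_apply i⟩
  rw [Nat.card_congr (Equiv.subtypeEquivRight h1)]
  have e2 : {π : Equiv.Perm (Fin (m + 1)) // IsC1 (m + 1) ⇑π.symm} ≃
      {p : Fin (m + 1) → Fin (m + 1) // IsC1 (m + 1) p} := by
    refine ⟨fun π => ⟨⇑π.1.symm, π.2⟩,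
      fun p => ⟨(Equiv.ofBijective p.1 p.2.1).symm, ?_⟩, ?_, ?_⟩
    · rw [Equiv.symm_symm]
      exact p.2
    · intro π
      apply Subtype.ext
      show (Equiv.ofBijective (⇑π.1.symm) π.2.1).symm = π.1
      have he : Equiv.ofBijective (⇑π.1.symm) π.2.1 = π.1.symm := Equiv.ext fun _ => rfl
      rw [he, Equiv.symm_symm]
    · intro p
      apply Subtype.ext
      show ⇑(Equiv.ofBijective p.1 p.2.1).symm.symm = p.1
      rw [Equiv.symm_symm]
      rfl
  rw [Nat.card_congr e2]
  have e3 : {p : Fin (m + 1) → Fin (m + 1) // IsC1 (m + 1) p} ≃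
      {l : List ℕ // l ∈ PayAux8.topSeqs (m + 1)} := by
    apply Equiv.ofBijective (fun p => ⟨List.ofFn (fun i => ((p.1 i : ℕ))),
      PayAux9.listOf_mem_topSeqs p.1 p.2⟩)
    constructor
    · intro p q hpq
      have h2 : (fun i => ((p.1 i : ℕ))) = (fun i => ((q.1 i : ℕ))) :=
        List.ofFn_injective (congrArg Subtype.val hpq)
      apply Subtype.ext
      funext i
      exact Fin.ext (congrFun h2 i)
    · rintro ⟨l, hl⟩
      obtain ⟨p, hp, hlist⟩ := PayAux9.topSeqs_sound hl
      exact ⟨⟨p, hp⟩, Subtype.ext hlist⟩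
  rw [Nat.card_congr e3]
  exact Nat.card_eq_finsetCard _
end

section
/- Define f(n) := #_1 S(n−1) for integers n ≥ 1. Then f(1) = 0, f(2) = 1, and f(n) = f(⌊n/2⌋) + f(⌈n/2⌉) for every integer n ≥ 3. -/
open Nat

/-- The function `f(n) := #₁ S(n−1)` satisfies `f(1) = 0`, `f(2) = 1` and
`f(n) = f(⌊n/2⌋) + f(⌈n/2⌉)` for `n ≥ 3`. -/
theorem stmt14 (f : ℕ → ℕ) (hf : ∀ n : ℕ, 1 ≤ n → f n = Multiset.count 1 (S (n - 1))) :
    f 1 = 0 ∧ f 2 = 1 ∧ ∀ n : ℕ, 3 ≤ n → f n = f (n / 2) + f ((n + 1) / 2) := by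
  refine ⟨?_, ?_, ?_⟩
  · rw [hf 1 (by norm_num)]; simp [S]
  · rw [hf 2 (by norm_num)]; simp [S]
  · intro n hn
    rw [hf n (by omega), hf (n / 2) (by omega), hf ((n + 1) / 2) (by omega)]
    obtain ⟨k, rfl⟩ : ∃ k, n = k + 3 := ⟨n - 3, by omega⟩
    have h : k + 3 - 1 = (k + 1) + 1 := by omega
    have hne : (1 : ℕ) ≠ (k + 1) + 1 := by omega
    rw [h, S, Multiset.count_cons_of_ne hne, Multiset.count_add]
    congr 2 <;> congr 1 <;> omega
end
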